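/- arXiv:2602.00264 — 6 statements merged into one kernel-verified Lean document; each statement's English description precedes it below -/
import Mathlib

section
/- For all integers k ≥ 2, all integers l with 1 ≤ l < k, and all real a ≥ 1, the inequality C(k,l) · Γ(al+1) · Γ(a(k-l)+1) / Γ(ak+1) ≤ 2·√a holds, where C(k,l) is the binomial coefficient and Γ is the Gamma function. -/
open Real MeasureTheory intervalIntegral

private lemma my_intble (c d : ℝ) (hc : 0 ≤ c) (hd : 0 ≤ d) :
    IntervalIntegrable (fun t : ℝ => t ^ c * (1 - t) ^ d) volume 0 1 := by
  apply Continuous.intervalIntegrable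
  have h1 : Continuous fun t : ℝ => t ^ c :=
    continuous_iff_continuousAt.mpr fun x => Real.continuousAt_rpow_const x c (Or.inr hc)
  have h2 : Continuous fun t : ℝ => (1 - t) ^ d :=
    (continuous_iff_continuousAt.mpr fun x =>
      Real.continuousAt_rpow_const x d (Or.inr hd)).comp (continuous_const.sub continuous_id)
  exact h1.mul h2

private lemma my_betaReal (x y : ℝ) (hx : 0 ≤ x) (hy : 0 ≤ y) :
    Real.Gamma (x + 1) * Real.Gamma (y + 1) =
      Real.Gamma (x + y + 2) * ∫ t in (0:ℝ)..1, t ^ x * (1 - t) ^ y := by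
  have h := Complex.Gamma_mul_Gamma_eq_betaIntegral
    (s := (x : ℂ) + 1) (t := (y : ℂ) + 1) (by simp; linarith) (by simp; linarith)
  have hbeta : Complex.betaIntegral ((x : ℂ) + 1) ((y : ℂ) + 1)
      = ((∫ t in (0:ℝ)..1, t ^ x * (1 - t) ^ y : ℝ) : ℂ) := by
    rw [Complex.betaIntegral, ← intervalIntegral.integral_ofReal]
    apply intervalIntegral.integral_congr
    intro t ht
    rw [Set.uIcc_of_le (by norm_num : (0:ℝ) ≤ 1)] at ht
    obtain ⟨h0, h1⟩ := ht
    simp only [add_sub_cancel_right]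
    rw [Complex.ofReal_mul, Complex.ofReal_cpow h0, Complex.ofReal_cpow (by linarith),
      Complex.ofReal_sub, Complex.ofReal_one]
  rw [hbeta] at h
  have h2 : ((x : ℂ) + 1) + ((y : ℂ) + 1) = ((x + y + 2 : ℝ) : ℂ) := by push_cast; ring
  rw [h2] at h
  have h3 : ((x : ℂ) + 1) = ((x + 1 : ℝ) : ℂ) := by push_cast; ring
  have h4 : ((y : ℂ) + 1) = ((y + 1 : ℝ) : ℂ) := by push_cast; ring
  rw [h3, h4, Complex.Gamma_ofReal, Complex.Gamma_ofReal, Complex.Gamma_ofReal] at h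
  exact_mod_cast h

private lemma my_choose_ge (k l : ℕ) (hl : 1 ≤ l) (hlk : l < k) : k ≤ k.choose l := by
  induction k with
  | zero => omega
  | succ m ih =>
    rcases Nat.lt_or_ge l m with hlm | hlm
    · rcases Nat.eq_or_lt_of_le hl with h1 | h2
      · rw [← h1]; simp
      · obtain ⟨j, rfl⟩ : ∃ j, l = j + 1 := ⟨l - 1, by omega⟩
        rw [Nat.choose_succ_succ]
        have hb : 1 ≤ m.choose j := Nat.choose_pos (by omega)
        have := ih (by omega)
        simp only [Nat.succ_eq_add_one] at *
        omega
    · have : l = m := by omega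
      subst this
      rw [Nat.choose_succ_self_right]

private lemma my_sup_bound (L N t : ℝ) (hL : 0 < L) (hN : 0 < N) (ht0 : 0 ≤ t) (ht1 : t ≤ 1) :
    t ^ L * (1 - t) ^ N ≤ (L / (L + N)) ^ L * (N / (L + N)) ^ N := by
  set K := L + N with hK
  have hKpos : 0 < K := by positivity
  have hw1 : 0 < L / K := by positivity
  have hw2 : 0 < N / K := by positivity
  have ht1' : (0:ℝ) ≤ 1 - t := by linarith
  have hp1 : (0:ℝ) ≤ t / (L / K) := div_nonneg ht0 hw1.le
  have hp2 : (0:ℝ) ≤ (1 - t) / (N / K) := div_nonneg ht1' hw2.le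
  have hsum : L / K + N / K = 1 := by field_simp; exact hK.symm
  have hgm := Real.geom_mean_le_arith_mean2_weighted hw1.le hw2.le hp1 hp2 hsum
  have key : (t / (L / K)) ^ (L / K) * ((1 - t) / (N / K)) ^ (N / K) ≤ 1 := by
    calc (t / (L / K)) ^ (L / K) * ((1 - t) / (N / K)) ^ (N / K)
        ≤ L / K * (t / (L / K)) + N / K * ((1 - t) / (N / K)) := hgm
      _ = 1 := by field_simp; ring
  have hb1 : (0:ℝ) ≤ (t / (L / K)) ^ (L / K) := Real.rpow_nonneg hp1 _
  have hb2 : (0:ℝ) ≤ ((1 - t) / (N / K)) ^ (N / K) := Real.rpow_nonneg hp2 _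
  have key2 : ((t / (L / K)) ^ (L / K) * ((1 - t) / (N / K)) ^ (N / K)) ^ K ≤ 1 := by
    have := Real.rpow_le_rpow (mul_nonneg hb1 hb2) key hKpos.le
    simpa using this
  have hexp : ((t / (L / K)) ^ (L / K) * ((1 - t) / (N / K)) ^ (N / K)) ^ K
      = (t / (L / K)) ^ L * ((1 - t) / (N / K)) ^ N := by
    rw [Real.mul_rpow hb1 hb2, ← Real.rpow_mul hp1, ← Real.rpow_mul hp2,
      div_mul_cancel₀ _ hKpos.ne', div_mul_cancel₀ _ hKpos.ne']
  rw [hexp] at key2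
  rw [Real.div_rpow ht0 hw1.le, Real.div_rpow ht1' hw2.le] at key2
  have h1 : (0:ℝ) < (L / K) ^ L := Real.rpow_pos_of_pos hw1 _
  have h2 : (0:ℝ) < (N / K) ^ N := Real.rpow_pos_of_pos hw2 _
  calc t ^ L * (1 - t) ^ N
      = (t ^ L / (L / K) ^ L * ((1 - t) ^ N / (N / K) ^ N)) * ((L / K) ^ L * (N / K) ^ N) := by
        field_simp
    _ ≤ 1 * ((L / K) ^ L * (N / K) ^ N) :=
        mul_le_mul_of_nonneg_right key2 (by positivity)
    _ = (L / K) ^ L * (N / K) ^ N := one_mul _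

private lemma my_two_rpow (a : ℝ) (ha : 1 ≤ a) : a ≤ (2:ℝ) ^ a := by
  rw [Real.rpow_def_of_pos (by norm_num : (0:ℝ) < 2)]
  have h1 := Real.add_one_le_exp (Real.log 2 * a - 1)
  have h2 : Real.exp (Real.log 2 * a) = Real.exp 1 * Real.exp (Real.log 2 * a - 1) := by
    rw [← Real.exp_add]; ring_nf
  nlinarith [Real.log_two_gt_d9, Real.exp_one_gt_d9, Real.exp_pos (Real.log 2 * a - 1)]

private lemma my_final (a : ℝ) (ha : 1 ≤ a) : a * (1/2:ℝ) ^ (a-1) ≤ 2 * Real.sqrt a := by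
  have ha0 : (0:ℝ) < a := by linarith
  have h2a := my_two_rpow a ha
  have hs1 : 1 ≤ Real.sqrt a := by
    rw [show (1:ℝ) = Real.sqrt 1 by simp]
    exact Real.sqrt_le_sqrt ha
  have hsq : Real.sqrt a * Real.sqrt a = a := Real.mul_self_sqrt ha0.le
  have hpow : (0:ℝ) < (2:ℝ) ^ a := Real.rpow_pos_of_pos (by norm_num) a
  have hhalf : (1/2:ℝ) ^ (a-1) = 2 / (2:ℝ) ^ a := by
    rw [one_div, Real.inv_rpow (by norm_num : (0:ℝ) ≤ 2),
      Real.rpow_sub (by norm_num : (0:ℝ) < 2), Real.rpow_one]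
    field_simp
  rw [hhalf]
  have key : a ≤ Real.sqrt a * (2:ℝ) ^ a := by nlinarith
  calc a * (2 / (2:ℝ) ^ a) = 2 * (a / (2:ℝ) ^ a) := by ring
    _ ≤ 2 * Real.sqrt a := by
        apply mul_le_mul_of_nonneg_left _ (by norm_num)
        rw [div_le_iff₀ hpow]
        nlinarith

set_option maxHeartbeats 1000000 in
/-- For integers `k ≥ 2`, `1 ≤ l < k` and real `a ≥ 1`,
`C(k,l) Γ(al+1) Γ(a(k-l)+1) / Γ(ak+1) ≤ 2 √a`. -/
theorem stmt_4 (k l : ℕ) (a : ℝ) (hk : 2 ≤ k) (hl : 1 ≤ l) (hlk : l < k) (ha : 1 ≤ a) :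
    (k.choose l : ℝ) * Real.Gamma (a * l + 1) * Real.Gamma (a * ((k : ℝ) - l) + 1) /
      Real.Gamma (a * k + 1) ≤ 2 * Real.sqrt a := by
  obtain ⟨n, hn, hn1⟩ : ∃ n : ℕ, l + n = k ∧ 1 ≤ n := ⟨k - l, by omega, by omega⟩
  have hK : (k:ℝ) = (l:ℝ) + (n:ℝ) := by rw [← hn]; push_cast; ring
  have hkl : (k:ℝ) - (l:ℝ) = (n:ℝ) := by rw [hK]; ring
  rw [hkl]
  have hL : (0:ℝ) < l := by exact_mod_cast hl
  have hN : (0:ℝ) < n := by exact_mod_cast hn1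
  have hk0 : (0:ℝ) < k := by positivity
  have ha0 : (0:ℝ) < a := by linarith
  set Ja := ∫ t in (0:ℝ)..1, t ^ (a*(l:ℝ)) * (1-t) ^ (a*(n:ℝ)) with hJa
  set J1 := ∫ t in (0:ℝ)..1, t ^ (l:ℝ) * (1-t) ^ (n:ℝ) with hJ1
  set M := ((l:ℝ)/k) ^ (l:ℝ) * ((n:ℝ)/k) ^ (n:ℝ) with hM
  have hM0 : 0 < M := mul_pos (Real.rpow_pos_of_pos (by positivity) _)
    (Real.rpow_pos_of_pos (by positivity) _)
  -- Beta identity for the a-exponents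
  have e1 := my_betaReal (a*(l:ℝ)) (a*(n:ℝ)) (by positivity) (by positivity)
  rw [show a*(l:ℝ) + a*(n:ℝ) + 2 = a*(k:ℝ) + 2 by rw [hK]; ring] at e1
  have hne : a*(k:ℝ) + 1 ≠ 0 := by positivity
  have e2 : Real.Gamma (a*(k:ℝ)+2) = (a*(k:ℝ)+1) * Real.Gamma (a*(k:ℝ)+1) := by
    have h := Real.Gamma_add_one hne
    rw [show a*(k:ℝ)+1+1 = a*(k:ℝ)+2 by ring] at h
    exact h
  -- value of J1
  have e3 := my_betaReal (l:ℝ) (n:ℝ) hL.le hN.le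
  rw [show (l:ℝ) + (n:ℝ) + 2 = ((k+1:ℕ):ℝ) + 1 by push_cast [← hn]; ring,
    Real.Gamma_nat_eq_factorial l, Real.Gamma_nat_eq_factorial n,
    Real.Gamma_nat_eq_factorial (k+1)] at e3
  rw [← hJ1] at e3
  rw [← hJa] at e1
  have hfact : (k.choose l : ℝ) * (l.factorial : ℝ) * (n.factorial : ℝ) = (k.factorial : ℝ) := by
    have h := Nat.choose_mul_factorial_mul_factorial hlk.le
    rw [show k - l = n by omega] at h
    exact_mod_cast congrArg (Nat.cast (R := ℝ)) h
  have hkf : ((k+1).factorial : ℝ) = ((k:ℝ)+1) * (k.factorial : ℝ) := by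
    rw [Nat.factorial_succ]; push_cast; ring
  have hCJ : (k.choose l : ℝ) * J1 = 1/((k:ℝ)+1) := by
    have h2 : (k.choose l : ℝ) * (((k:ℝ)+1) * (k.factorial : ℝ) * J1) = (k.factorial : ℝ) := by
      rw [← hkf, ← e3, ← hfact]; ring
    rw [eq_div_iff (by positivity : ((k:ℝ)+1) ≠ 0)]
    apply mul_right_cancel₀ (b := (k.factorial : ℝ)) (by positivity)
    linear_combination h2
  -- binomial: C * M ≤ 1
  have hCM : (k.choose l : ℝ) * M ≤ 1 := by
    have hpq : (l:ℝ)/k + (n:ℝ)/k = 1 := by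
      rw [← add_div, ← hK, div_self hk0.ne']
    have hbin := add_pow ((l:ℝ)/k) ((n:ℝ)/k) k
    rw [hpq, one_pow] at hbin
    have hmem : l ∈ Finset.range (k+1) := by simp; omega
    have hterm := Finset.single_le_sum
      (f := fun i => ((l:ℝ)/k)^i * ((n:ℝ)/k)^(k-i) * (k.choose i : ℝ))
      (fun i _ => by positivity) hmem
    rw [← hbin] at hterm
    have hterm2 : ((l:ℝ)/k)^l * ((n:ℝ)/k)^(k-l) * (k.choose l : ℝ) ≤ 1 := hterm
    rw [show k - l = n by omega] at hterm2
    have hMeq : M = ((l:ℝ)/k)^l * ((n:ℝ)/k)^n := by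
      rw [hM, Real.rpow_natCast, Real.rpow_natCast]
    calc (k.choose l : ℝ) * M = ((l:ℝ)/k)^l * ((n:ℝ)/k)^n * (k.choose l : ℝ) := by
          rw [hMeq]; ring
      _ ≤ 1 := hterm2
  -- pointwise bound and integral comparison
  have hMa1 : (0:ℝ) ≤ a - 1 := by linarith
  have hpt : ∀ t ∈ Set.Icc (0:ℝ) 1,
      t ^ (a*(l:ℝ)) * (1-t) ^ (a*(n:ℝ)) ≤ M^(a-1) * (t ^ (l:ℝ) * (1-t) ^ (n:ℝ)) := by
    intro t ht
    obtain ⟨ht0, ht1⟩ := ht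
    have hRnn : (0:ℝ) ≤ M^(a-1) * (t ^ (l:ℝ) * (1-t) ^ (n:ℝ)) :=
      mul_nonneg (Real.rpow_nonneg hM0.le _)
        (mul_nonneg (Real.rpow_nonneg ht0 _) (Real.rpow_nonneg (by linarith) _))
    rcases eq_or_lt_of_le ht0 with h0 | h0
    · rw [← h0] at hRnn ⊢
      rw [Real.zero_rpow (by positivity : (0:ℝ) < a*(l:ℝ)).ne', zero_mul]
      exact hRnn
    rcases eq_or_lt_of_le ht1 with h1 | h1
    · rw [h1] at hRnn ⊢
      rw [sub_self] at hRnn ⊢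
      rw [Real.zero_rpow (by positivity : (0:ℝ) < a*(n:ℝ)).ne', mul_zero]
      exact hRnn
    · have h1t : (0:ℝ) < 1 - t := by linarith
      have hsb := my_sup_bound (l:ℝ) (n:ℝ) t hL hN ht0 ht1
      rw [← hK] at hsb
      have hkey : (t ^ (l:ℝ) * (1-t) ^ (n:ℝ)) ^ (a-1) ≤ M ^ (a-1) :=
        Real.rpow_le_rpow (mul_nonneg (Real.rpow_nonneg ht0 _) (Real.rpow_nonneg h1t.le _))
          hsb hMa1
      have e : ∀ x c : ℝ, 0 < x → x ^ (a*c) = (x ^ c) ^ (a-1) * x ^ c := by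
        intro x c hx
        rw [show a*c = c*(a-1) + c by ring, Real.rpow_add hx, Real.rpow_mul hx.le]
      have hexp : t ^ (a*(l:ℝ)) * (1-t) ^ (a*(n:ℝ))
          = (t ^ (l:ℝ) * (1-t) ^ (n:ℝ)) ^ (a-1) * (t ^ (l:ℝ) * (1-t) ^ (n:ℝ)) := by
        rw [e t (l:ℝ) h0, e (1-t) (n:ℝ) h1t,
          Real.mul_rpow (Real.rpow_nonneg ht0 _) (Real.rpow_nonneg h1t.le _)]
        ring
      rw [hexp]
      exact mul_le_mul_of_nonneg_right hkey
        (mul_nonneg (Real.rpow_nonneg ht0 _) (Real.rpow_nonneg h1t.le _))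
  have hmono : Ja ≤ M^(a-1) * J1 := by
    have hint1 := my_intble (a*(l:ℝ)) (a*(n:ℝ)) (by positivity) (by positivity)
    have hint2 := (my_intble (l:ℝ) (n:ℝ) hL.le hN.le).const_mul (M^(a-1))
    have h := intervalIntegral.integral_mono_on (by norm_num : (0:ℝ) ≤ 1) hint1 hint2 hpt
    rw [intervalIntegral.integral_const_mul] at h
    rw [hJa, hJ1]
    exact h
  -- main equality
  have hGpos : 0 < Real.Gamma (a*(k:ℝ)+1) := Real.Gamma_pos_of_pos (by positivity)
  have hmain : (k.choose l : ℝ) * Real.Gamma (a*(l:ℝ)+1) * Real.Gamma (a*(n:ℝ)+1) /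
      Real.Gamma (a*(k:ℝ)+1) = (k.choose l : ℝ) * ((a*(k:ℝ)+1) * Ja) := by
    rw [div_eq_iff hGpos.ne', mul_assoc ((k.choose l : ℝ)) _ _, e1, e2]
    ring
  rw [hmain]
  -- chain of bounds
  have hCpos : (0:ℝ) < (k.choose l : ℝ) := by exact_mod_cast Nat.choose_pos hlk.le
  have hkC : (k:ℝ) ≤ (k.choose l : ℝ) := by exact_mod_cast my_choose_ge k l hl hlk
  have hMk : M ≤ 1/(k:ℝ) := by
    rw [le_div_iff₀ hk0]
    calc M * k ≤ M * (k.choose l : ℝ) := mul_le_mul_of_nonneg_left hkC hM0.le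
      _ = (k.choose l : ℝ) * M := by ring
      _ ≤ 1 := hCM
  have hM12 : M^(a-1) ≤ (1/2:ℝ)^(a-1) := by
    apply Real.rpow_le_rpow hM0.le _ hMa1
    calc M ≤ 1/(k:ℝ) := hMk
      _ ≤ 1/2 := by
        apply one_div_le_one_div_of_le (by norm_num)
        exact_mod_cast hk
  have hMnn : (0:ℝ) ≤ M^(a-1) := Real.rpow_nonneg hM0.le _
  have hk1 : (0:ℝ) < (k:ℝ)+1 := by positivity
  have hak1 : (0:ℝ) < a*(k:ℝ)+1 := by positivity
  have hJann : 0 ≤ Ja := by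
    rw [hJa]
    apply intervalIntegral.integral_nonneg (by norm_num : (0:ℝ) ≤ 1)
    intro t ht
    exact mul_nonneg (Real.rpow_nonneg ht.1 _) (Real.rpow_nonneg (by linarith [ht.2]) _)
  calc (k.choose l : ℝ) * ((a*(k:ℝ)+1) * Ja)
      ≤ (k.choose l : ℝ) * ((a*(k:ℝ)+1) * (M^(a-1) * J1)) := by
        apply mul_le_mul_of_nonneg_left _ hCpos.le
        exact mul_le_mul_of_nonneg_left hmono hak1.le
    _ = (a*(k:ℝ)+1) * M^(a-1) * ((k.choose l : ℝ) * J1) := by ring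
    _ = (a*(k:ℝ)+1) * M^(a-1) * (1/((k:ℝ)+1)) := by rw [hCJ]
    _ ≤ (a*((k:ℝ)+1)) * (1/2:ℝ)^(a-1) * (1/((k:ℝ)+1)) := by
        apply mul_le_mul_of_nonneg_right _ (by positivity)
        apply mul_le_mul _ hM12 hMnn (by positivity)
        nlinarith
    _ = a * (1/2:ℝ)^(a-1) := by field_simp
    _ ≤ 2 * Real.sqrt a := my_final a ha
end

section
/- Let f : ℕ → ℝ≥0, let n ∈ ℕ ∪ {∞}, let 0 < ρ1 < ρ2, let λ > 0 and a ≥ 1. Then the shifted truncated Mittag–Leffler moments satisfy ℰ^n_{a,ρ1}(λ)⟨f⟩ ≤ (ℰ^n_a(λ)⟨f⟩)^((ρ2−ρ1)/ρ2) · (ℰ^n_{a,ρ2}(λ)⟨f⟩)^(ρ1/ρ2). -/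
/-- The `k`-th discrete moment `m_k⟨f⟩ = ∑_{i≥1} f(i) (i h)^k` with mesh size `h`. -/
noncomputable def mom (h k : ℝ) (f : ℕ → ℝ) : ℝ :=
  ∑' i : ℕ, f (i + 1) * (((i : ℝ) + 1) * h) ^ k

open scoped Classical in
/-- The `k`-th summand of the shifted truncated Mittag–Leffler moment
`ℰ^n_{a,ρ}(λ)⟨f⟩`: it is `m_{k+ρ}⟨f⟩ λ^{ak}/Γ(ak+1)` for `1 ≤ k ≤ n` and `0` otherwise. -/
noncomputable def truncTerm (h : ℝ) (n : ℕ∞) (a ρ lam : ℝ) (f : ℕ → ℝ) (k : ℕ) : ℝ :=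
  if ((k : ℕ∞) + 1 ≤ n) then
    mom h (((k : ℝ) + 1) + ρ) f * lam ^ (a * ((k : ℝ) + 1)) /
      Real.Gamma (a * ((k : ℝ) + 1) + 1)
  else 0

/-- The shifted truncated Mittag–Leffler moment
`ℰ^n_{a,ρ}(λ)⟨f⟩ = ∑_{k=1}^n m_{k+ρ}⟨f⟩ λ^{ak}/Γ(ak+1)`, with `n ∈ ℕ ∪ {∞}`. -/
noncomputable def truncML (h : ℝ) (n : ℕ∞) (a ρ lam : ℝ) (f : ℕ → ℝ) : ℝ :=
  ∑' k : ℕ, truncTerm h n a ρ lam f k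

open MeasureTheory ENNReal in
/-- Hölder's inequality for `tsum` over `ℕ` in `ℝ≥0∞`. -/
lemma tsum_holder {θ : ℝ} (hθ : 0 < θ) (hθ1 : θ < 1) (A B : ℕ → ℝ≥0∞) :
    ∑' k, A k ^ (1 - θ) * B k ^ θ ≤ (∑' k, A k) ^ (1 - θ) * (∑' k, B k) ^ θ := by
  have hθ' : (0:ℝ) < 1 - θ := by linarith
  have hpq : (1 / (1 - θ)).HolderConjugate (1 / θ) := by
    rw [Real.holderConjugate_iff]
    constructor
    · rw [lt_div_iff₀ hθ']; linarith
    · rw [one_div, one_div, inv_inv, inv_inv]; ring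
  have key := ENNReal.lintegral_mul_le_Lp_mul_Lq (Measure.count (α := ℕ)) hpq
    (f := fun k => A k ^ (1 - θ)) (g := fun k => B k ^ θ)
    (measurable_of_countable _).aemeasurable (measurable_of_countable _).aemeasurable
  simp only [Pi.mul_apply, lintegral_count] at key
  have hA : ∀ k, (A k ^ (1 - θ)) ^ (1 / (1 - θ)) = A k := by
    intro k
    rw [← ENNReal.rpow_mul, mul_one_div_cancel (ne_of_gt hθ'), ENNReal.rpow_one]
  have hB : ∀ k, (B k ^ θ) ^ (1 / θ) = B k := by
    intro k
    rw [← ENNReal.rpow_mul, mul_one_div_cancel (ne_of_gt hθ), ENNReal.rpow_one]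
  simp only [hA, hB, one_div_one_div] at key
  exact key

/-- Interpolation for shifted truncated Mittag–Leffler moments: for `0 < ρ1 < ρ2`,
`ℰ^n_{a,ρ1}(λ)⟨f⟩ ≤ (ℰ^n_a(λ)⟨f⟩)^((ρ2-ρ1)/ρ2) (ℰ^n_{a,ρ2}(λ)⟨f⟩)^(ρ1/ρ2)`
(here `ℰ^n_a = ℰ^n_{a,0}`). -/
theorem stmt_8 (h : ℝ) (n : ℕ∞) (a ρ1 ρ2 lam : ℝ) (f : ℕ → ℝ)
    (hh : 0 < h) (hf : ∀ i, 0 ≤ f i)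
    (hρ1 : 0 < ρ1) (hρ12 : ρ1 < ρ2) (hlam : 0 < lam) (ha : 1 ≤ a)
    (hmom : ∀ r : ℝ, Summable (fun i : ℕ => f (i + 1) * (((i : ℝ) + 1) * h) ^ r))
    (hs0 : Summable (truncTerm h n a 0 lam f))
    (hs1 : Summable (truncTerm h n a ρ1 lam f))
    (hs2 : Summable (truncTerm h n a ρ2 lam f)) :
    truncML h n a ρ1 lam f ≤
      (truncML h n a 0 lam f) ^ ((ρ2 - ρ1) / ρ2) * (truncML h n a ρ2 lam f) ^ (ρ1 / ρ2) := by
  classical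
  have hρ2 : (0:ℝ) < ρ2 := hρ1.trans hρ12
  set θ : ℝ := ρ1 / ρ2 with hθdef
  have hθ : 0 < θ := div_pos hρ1 hρ2
  have hθ1 : θ < 1 := (div_lt_one hρ2).mpr hρ12
  have hθ'eq : (ρ2 - ρ1) / ρ2 = 1 - θ := by rw [hθdef, sub_div, div_self hρ2.ne']
  have hθρ2 : θ * ρ2 = ρ1 := div_mul_cancel₀ _ (ne_of_gt hρ2)
  have hθ'pos : (0:ℝ) < 1 - θ := by linarith
  -- nonnegativity
  have hterm_nonneg : ∀ (r : ℝ) (i : ℕ), 0 ≤ f (i + 1) * (((i : ℝ) + 1) * h) ^ r := by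
    intro r i
    exact mul_nonneg (hf _) (Real.rpow_nonneg (by positivity) _)
  have hmom_nonneg : ∀ r, 0 ≤ mom h r f := fun r => tsum_nonneg (hterm_nonneg r)
  have hΓpos : ∀ k : ℕ, 0 < Real.Gamma (a * ((k : ℝ) + 1) + 1) := by
    intro k
    apply Real.Gamma_pos_of_pos
    have : (0:ℝ) < a * ((k:ℝ) + 1) := by positivity
    linarith
  have hwpos : ∀ k : ℕ, 0 < lam ^ (a * ((k : ℝ) + 1)) / Real.Gamma (a * ((k : ℝ) + 1) + 1) :=
    fun k => div_pos (Real.rpow_pos_of_pos hlam _) (hΓpos k)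
  have htrunc_nonneg : ∀ ρ k, 0 ≤ truncTerm h n a ρ lam f k := by
    intro ρ k
    unfold truncTerm
    split
    · rw [mul_div_assoc]
      exact mul_nonneg (hmom_nonneg _) (hwpos k).le
    · exact le_refl 0
  -- the real pointwise interpolation identity
  have hreal : ∀ (K c x : ℝ), 0 ≤ c → 0 < x →
      (c * x ^ (K + 0)) ^ (1 - θ) * (c * x ^ (K + ρ2)) ^ θ = c * x ^ (K + ρ1) := by
    intro K c x hc hx
    have hx' := hx.le
    rw [Real.mul_rpow hc (Real.rpow_nonneg hx' _), Real.mul_rpow hc (Real.rpow_nonneg hx' _),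
        mul_mul_mul_comm, ← Real.rpow_add' hc (by norm_num : (1 - θ) + θ ≠ 0),
        show (1 - θ) + θ = 1 by ring, Real.rpow_one,
        ← Real.rpow_mul hx', ← Real.rpow_mul hx', ← Real.rpow_add hx,
        show (K + 0) * (1 - θ) + (K + ρ2) * θ = K + ρ1 by linear_combination hθρ2]
  -- pointwise ENNReal version
  have hofR : ∀ (K : ℝ) (i : ℕ),
      ENNReal.ofReal (f (i + 1) * (((i : ℝ) + 1) * h) ^ (K + ρ1)) =
        ENNReal.ofReal (f (i + 1) * (((i : ℝ) + 1) * h) ^ (K + 0)) ^ (1 - θ) *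
          ENNReal.ofReal (f (i + 1) * (((i : ℝ) + 1) * h) ^ (K + ρ2)) ^ θ := by
    intro K i
    rw [ENNReal.ofReal_rpow_of_nonneg (hterm_nonneg _ i) hθ'pos.le,
        ENNReal.ofReal_rpow_of_nonneg (hterm_nonneg _ i) hθ.le,
        ← ENNReal.ofReal_mul (Real.rpow_nonneg (hterm_nonneg _ i) _),
        hreal K _ _ (hf _) (by positivity)]
  -- interpolation for the moments
  have hmomle : ∀ k : ℕ,
      ENNReal.ofReal (mom h (((k : ℝ) + 1) + ρ1) f) ≤
        ENNReal.ofReal (mom h (((k : ℝ) + 1) + 0) f) ^ (1 - θ) *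
          ENNReal.ofReal (mom h (((k : ℝ) + 1) + ρ2) f) ^ θ := by
    intro k
    unfold mom
    rw [ENNReal.ofReal_tsum_of_nonneg (hterm_nonneg _) (hmom _),
        ENNReal.ofReal_tsum_of_nonneg (hterm_nonneg _) (hmom _),
        ENNReal.ofReal_tsum_of_nonneg (hterm_nonneg _) (hmom _)]
    calc ∑' i, ENNReal.ofReal (f (i + 1) * (((i : ℝ) + 1) * h) ^ (((k : ℝ) + 1) + ρ1))
        = ∑' i, ENNReal.ofReal (f (i + 1) * (((i : ℝ) + 1) * h) ^ (((k : ℝ) + 1) + 0)) ^ (1 - θ) *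
            ENNReal.ofReal (f (i + 1) * (((i : ℝ) + 1) * h) ^ (((k : ℝ) + 1) + ρ2)) ^ θ :=
          tsum_congr fun i => hofR _ i
      _ ≤ _ := tsum_holder hθ hθ1 _ _
  -- pointwise inequality on truncated terms
  have hT : ∀ k : ℕ,
      ENNReal.ofReal (truncTerm h n a ρ1 lam f k) ≤
        ENNReal.ofReal (truncTerm h n a 0 lam f k) ^ (1 - θ) *
          ENNReal.ofReal (truncTerm h n a ρ2 lam f k) ^ θ := by
    intro k
    unfold truncTerm
    by_cases hk : ((k : ℕ∞) + 1 ≤ n)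
    · simp only [if_pos hk, mul_div_assoc]
      set w : ℝ := lam ^ (a * ((k : ℝ) + 1)) / Real.Gamma (a * ((k : ℝ) + 1) + 1) with hw
      have hw0 : 0 < w := hwpos k
      rw [ENNReal.ofReal_mul (hmom_nonneg _), ENNReal.ofReal_mul (hmom_nonneg _),
          ENNReal.ofReal_mul (hmom_nonneg _),
          ENNReal.mul_rpow_of_nonneg _ _ hθ'pos.le, ENNReal.mul_rpow_of_nonneg _ _ hθ.le,
          mul_mul_mul_comm]
      have hwc : ENNReal.ofReal w ^ (1 - θ) * ENNReal.ofReal w ^ θ = ENNReal.ofReal w := by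
        rw [← ENNReal.rpow_add _ _ (by simpa using hw0) ENNReal.ofReal_ne_top,
            show (1 - θ) + θ = 1 by ring, ENNReal.rpow_one]
      rw [hwc]
      exact mul_le_mul_left (hmomle k) _
    · simp [if_neg hk, ENNReal.zero_rpow_of_pos hθ'pos, ENNReal.zero_rpow_of_pos hθ]
  -- sum up
  have hsum : ENNReal.ofReal (truncML h n a ρ1 lam f) ≤
      ENNReal.ofReal (truncML h n a 0 lam f) ^ (1 - θ) *
        ENNReal.ofReal (truncML h n a ρ2 lam f) ^ θ := by
    unfold truncML
    rw [ENNReal.ofReal_tsum_of_nonneg (htrunc_nonneg _) hs1,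
        ENNReal.ofReal_tsum_of_nonneg (htrunc_nonneg _) hs0,
        ENNReal.ofReal_tsum_of_nonneg (htrunc_nonneg _) hs2]
    calc ∑' k, ENNReal.ofReal (truncTerm h n a ρ1 lam f k)
        ≤ ∑' k, ENNReal.ofReal (truncTerm h n a 0 lam f k) ^ (1 - θ) *
            ENNReal.ofReal (truncTerm h n a ρ2 lam f k) ^ θ := ENNReal.tsum_le_tsum hT
      _ ≤ _ := tsum_holder hθ hθ1 _ _
  -- back to the reals
  have hfin : ENNReal.ofReal (truncML h n a 0 lam f) ^ (1 - θ) *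
      ENNReal.ofReal (truncML h n a ρ2 lam f) ^ θ ≠ ⊤ :=
    ENNReal.mul_ne_top (ENNReal.rpow_ne_top_of_nonneg hθ'pos.le ENNReal.ofReal_ne_top)
      (ENNReal.rpow_ne_top_of_nonneg hθ.le ENNReal.ofReal_ne_top)
  have hMLnn : ∀ ρ : ℝ, 0 ≤ truncML h n a ρ lam f := fun ρ => tsum_nonneg (htrunc_nonneg ρ)
  have := ENNReal.toReal_mono hfin hsum
  rw [ENNReal.toReal_ofReal (hMLnn ρ1), ENNReal.toReal_mul,
      ← ENNReal.toReal_rpow, ← ENNReal.toReal_rpow,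
      ENNReal.toReal_ofReal (hMLnn 0), ENNReal.toReal_ofReal (hMLnn ρ2)] at this
  rw [hθ'eq]
  exact this
end

section
/- Let f : ℕ → ℝ≥0 with all moments finite, let n ∈ ℕ, λ > 0 and a ≥ 1, and let α1, β1 ≥ 0. Then ∑_{k=1}^n ∑_{l=1}^{k-1} C(k,l) · m_{α1+l}⟨f⟩ · m_{α1+β1+k−l}⟨f⟩ · λ^{ak}/Γ(ak+1) ≤ 2√a · ℰ^n_{a,α1}(λ)⟨f⟩ · ℰ^n_{a,α1+β1}(λ)⟨f⟩. -/
/-- Shifted truncated Mittag–Leffler moment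
`ℰ^n_{a,ρ}(λ)⟨f⟩ = ∑_{k=1}^n m_{k+ρ}⟨f⟩ λ^{ak}/Γ(ak+1)` for finite `n`. -/
noncomputable def emlN (h : ℝ) (n : ℕ) (a ρ lam : ℝ) (f : ℕ → ℝ) : ℝ :=
  ∑ k ∈ Finset.Icc 1 n, mom h ((k : ℝ) + ρ) f * lam ^ (a * k) / Real.Gamma (a * k + 1)

lemma logGamma_incr {x1 x2 c : ℝ} (h1 : 0 < x1) (hx : x1 ≤ x2) (hc : 0 ≤ c) :
    Real.log (Real.Gamma (x1 + c)) + Real.log (Real.Gamma x2)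
      ≤ Real.log (Real.Gamma x1) + Real.log (Real.Gamma (x2 + c)) := by
  rcases eq_or_lt_of_le (by linarith : (0:ℝ) ≤ x2 - x1 + c) with hD | hD
  · have hc0 : c = 0 := by linarith [sub_nonneg.2 hx]
    have hx0 : x2 = x1 := by linarith [sub_nonneg.2 hx]
    simp [hc0, hx0, add_comm]
  · have hDne : x2 - x1 + c ≠ 0 := ne_of_gt hD
    have ht0 : 0 ≤ c / (x2 - x1 + c) := div_nonneg hc hD.le
    have ht1 : 0 ≤ (x2 - x1) / (x2 - x1 + c) := div_nonneg (by linarith) hD.le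
    have hsum : (x2 - x1) / (x2 - x1 + c) + c / (x2 - x1 + c) = 1 := by field_simp
    have hcvx := Real.convexOn_log_Gamma.2 (Set.mem_Ioi.2 h1)
      (Set.mem_Ioi.2 (by linarith : (0:ℝ) < x2 + c))
    have k1 := hcvx ht1 ht0 hsum
    have k2 := hcvx ht0 ht1 (by linarith)
    have e1 : ((x2 - x1) / (x2 - x1 + c)) • x1 + (c / (x2 - x1 + c)) • (x2 + c) = x1 + c := by
      simp only [smul_eq_mul]; field_simp; ring
    have e2 : (c / (x2 - x1 + c)) • x1 + ((x2 - x1) / (x2 - x1 + c)) • (x2 + c) = x2 := by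
      simp only [smul_eq_mul]; field_simp; ring
    rw [e1] at k1; rw [e2] at k2
    simp only [Function.comp_apply, smul_eq_mul] at k1 k2
    calc Real.log (Real.Gamma (x1 + c)) + Real.log (Real.Gamma x2)
        ≤ ((x2 - x1) / (x2 - x1 + c) * Real.log (Real.Gamma x1)
            + c / (x2 - x1 + c) * Real.log (Real.Gamma (x2 + c)))
          + (c / (x2 - x1 + c) * Real.log (Real.Gamma x1)
            + (x2 - x1) / (x2 - x1 + c) * Real.log (Real.Gamma (x2 + c))) := add_le_add k1 k2
      _ = ((x2 - x1) / (x2 - x1 + c) + c / (x2 - x1 + c)) * Real.log (Real.Gamma x1)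
          + ((x2 - x1) / (x2 - x1 + c) + c / (x2 - x1 + c)) * Real.log (Real.Gamma (x2 + c)) := by
          ring
      _ = Real.log (Real.Gamma x1) + Real.log (Real.Gamma (x2 + c)) := by rw [hsum]; ring
lemma choose_gamma_le {a : ℝ} (ha : 1 ≤ a) {k l : ℕ} (hl : 1 ≤ l) (hlk : l < k) :
    (k.choose l : ℝ) * Real.Gamma (a * l + 1) * Real.Gamma (a * ((k:ℝ) - l) + 1)
      ≤ Real.Gamma (a * k + 1) := by
  have ha0 : (0:ℝ) < a := lt_of_lt_of_le one_pos ha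
  have hL1 : (1:ℝ) ≤ (l:ℝ) := by exact_mod_cast hl
  have hKL : (l:ℝ) + 1 ≤ (k:ℝ) := by exact_mod_cast hlk
  have s1 := logGamma_incr (x1 := (l:ℝ) + 1) (x2 := a*((k:ℝ)-(l:ℝ))+(l:ℝ)+1) (c := (a-1)*(l:ℝ))
    (by linarith) (by nlinarith) (by nlinarith)
  rw [show (l:ℝ) + 1 + (a-1)*(l:ℝ) = a*(l:ℝ)+1 by ring,
      show a*((k:ℝ)-(l:ℝ))+(l:ℝ)+1 + (a-1)*(l:ℝ) = a*(k:ℝ)+1 by ring] at s1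
  have s2 := logGamma_incr (x1 := (k:ℝ)-(l:ℝ)+1) (x2 := (k:ℝ)+1) (c := (a-1)*((k:ℝ)-(l:ℝ)))
    (by linarith) (by linarith) (by nlinarith)
  rw [show (k:ℝ)-(l:ℝ)+1 + (a-1)*((k:ℝ)-(l:ℝ)) = a*((k:ℝ)-(l:ℝ))+1 by ring,
      show (k:ℝ)+1+(a-1)*((k:ℝ)-(l:ℝ)) = a*((k:ℝ)-(l:ℝ))+(l:ℝ)+1 by ring] at s2
  have pA := Real.Gamma_pos_of_pos (show (0:ℝ) < a*(l:ℝ)+1 by nlinarith)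
  have pB := Real.Gamma_pos_of_pos (show (0:ℝ) < a*((k:ℝ)-(l:ℝ))+1 by nlinarith)
  have pF := Real.Gamma_pos_of_pos (show (0:ℝ) < (k:ℝ)+1 by linarith)
  have pA' := Real.Gamma_pos_of_pos (show (0:ℝ) < (l:ℝ)+1 by linarith)
  have pB' := Real.Gamma_pos_of_pos (show (0:ℝ) < (k:ℝ)-(l:ℝ)+1 by linarith)
  have pG := Real.Gamma_pos_of_pos (show (0:ℝ) < a*(k:ℝ)+1 by nlinarith)
  have mainlog : Real.log (Real.Gamma (a*(l:ℝ)+1) * Real.Gamma (a*((k:ℝ)-(l:ℝ))+1)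
        * Real.Gamma ((k:ℝ)+1))
      ≤ Real.log (Real.Gamma ((l:ℝ)+1) * Real.Gamma ((k:ℝ)-(l:ℝ)+1)
        * Real.Gamma (a*(k:ℝ)+1)) := by
    rw [Real.log_mul (mul_pos pA pB).ne' pF.ne', Real.log_mul pA.ne' pB.ne',
        Real.log_mul (mul_pos pA' pB').ne' pG.ne', Real.log_mul pA'.ne' pB'.ne']
    linarith
  have main := (Real.log_le_log_iff (by positivity) (by positivity)).1 mainlog
  -- replace the non-a Gammas by factorials
  rw [Real.Gamma_nat_eq_factorial k, Real.Gamma_nat_eq_factorial l] at main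
  rw [show (k:ℝ)-(l:ℝ)+1 = ((k-l : ℕ):ℝ)+1 by push_cast [Nat.cast_sub hlk.le]; ring,
      Real.Gamma_nat_eq_factorial (k-l)] at main
  have hC : (k.choose l : ℝ) * (Nat.factorial l : ℝ) * (Nat.factorial (k-l) : ℝ) = (Nat.factorial k : ℝ) := by
    exact_mod_cast Nat.choose_mul_factorial_mul_factorial hlk.le
  have hFk : (0:ℝ) < (Nat.factorial k : ℝ) := by exact_mod_cast Nat.factorial_pos k
  refine le_of_mul_le_mul_right ?_ hFk
  calc (k.choose l : ℝ) * Real.Gamma (a*(l:ℝ)+1) * Real.Gamma (a*((k:ℝ)-(l:ℝ))+1) * (Nat.factorial k : ℝ)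
      = (k.choose l : ℝ) * (Real.Gamma (a*(l:ℝ)+1) * Real.Gamma (a*((k:ℝ)-(l:ℝ))+1) * (Nat.factorial k : ℝ)) := by
        ring
    _ ≤ (k.choose l : ℝ) * ((Nat.factorial l : ℝ) * (Nat.factorial (k-l) : ℝ) * Real.Gamma (a*(k:ℝ)+1)) :=
        mul_le_mul_of_nonneg_left main (Nat.cast_nonneg _)
    _ = ((k.choose l : ℝ) * (Nat.factorial l : ℝ) * (Nat.factorial (k-l) : ℝ)) * Real.Gamma (a*(k:ℝ)+1) := by ring
    _ = Real.Gamma (a*(k:ℝ)+1) * (Nat.factorial k : ℝ) := by rw [hC]; ring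

lemma double_sum_le (n : ℕ) (u v : ℕ → ℝ) (hu : ∀ i, 0 ≤ u i) (hv : ∀ i, 0 ≤ v i) :
    ∑ k ∈ Finset.Icc 1 n, ∑ l ∈ Finset.Ico 1 k, u l * v (k - l)
      ≤ (∑ l ∈ Finset.Icc 1 n, u l) * (∑ j ∈ Finset.Icc 1 n, v j) := by
  rw [Finset.sum_mul_sum]
  have step1 : ∑ k ∈ Finset.Icc 1 n, ∑ l ∈ Finset.Ico 1 k, u l * v (k - l)
      = ∑ p ∈ ((Finset.Icc 1 n ×ˢ Finset.Icc 1 n).filter (fun p => p.1 + p.2 ≤ n)),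
          u p.1 * v p.2 := by
    rw [Finset.sum_sigma']
    refine Finset.sum_nbij' (fun p => (p.2, p.1 - p.2)) (fun q => ⟨q.1 + q.2, q.1⟩)
      ?_ ?_ ?_ ?_ ?_
    · rintro ⟨k, l⟩ hp
      simp only [Finset.mem_sigma, Finset.mem_Icc, Finset.mem_Ico] at hp
      simp only [Finset.mem_filter, Finset.mem_product, Finset.mem_Icc]
      omega
    · rintro ⟨x, y⟩ hq
      simp only [Finset.mem_filter, Finset.mem_product, Finset.mem_Icc] at hq
      simp only [Finset.mem_sigma, Finset.mem_Icc, Finset.mem_Ico]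
      omega
    · rintro ⟨k, l⟩ hp
      simp only [Finset.mem_sigma, Finset.mem_Icc, Finset.mem_Ico] at hp
      have hkl : l + (k - l) = k := by omega
      simp [hkl]
    · rintro ⟨x, y⟩ hq
      simp only [Finset.mem_filter, Finset.mem_product, Finset.mem_Icc] at hq
      have hxy : x + y - x = y := by omega
      simp [hxy]
    · rintro ⟨k, l⟩ hp; rfl
  rw [step1, ← Finset.sum_product']
  refine Finset.sum_le_sum_of_subset_of_nonneg (Finset.filter_subset _ _) ?_
  intro p _ _
  exact mul_nonneg (hu _) (hv _)

lemma mom_nonneg (h k : ℝ) (f : ℕ → ℝ) (hh : 0 < h) (hf : ∀ i, 0 ≤ f i) : 0 ≤ mom h k f :=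
  tsum_nonneg fun i => mul_nonneg (hf _) (Real.rpow_nonneg (by positivity) _)

/-- Combinatorial Mittag–Leffler estimate:
`∑_{k=1}^n ∑_{l=1}^{k-1} C(k,l) m_{α1+l}⟨f⟩ m_{α1+β1+k-l}⟨f⟩ λ^{ak}/Γ(ak+1)
  ≤ 2√a ℰ^n_{a,α1}(λ)⟨f⟩ ℰ^n_{a,α1+β1}(λ)⟨f⟩`. -/
theorem stmt_9 (h : ℝ) (n : ℕ) (a lam α1 β1 : ℝ) (f : ℕ → ℝ)
    (hh : 0 < h) (hf : ∀ i, 0 ≤ f i)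
    (hmom : ∀ r : ℝ, Summable (fun i : ℕ => f (i + 1) * (((i : ℝ) + 1) * h) ^ r))
    (ha : 1 ≤ a) (hlam : 0 < lam) (hα1 : 0 ≤ α1) (hβ1 : 0 ≤ β1) :
    ∑ k ∈ Finset.Icc 1 n, ∑ l ∈ Finset.Ico 1 k,
        (k.choose l : ℝ) * mom h (α1 + l) f * mom h (α1 + β1 + ((k : ℝ) - l)) f *
          lam ^ (a * k) / Real.Gamma (a * k + 1)
      ≤ 2 * Real.sqrt a * emlN h n a α1 lam f * emlN h n a (α1 + β1) lam f := by
  have ha0 : (0:ℝ) < a := lt_of_lt_of_le one_pos ha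
  have hs : (1:ℝ) ≤ Real.sqrt a := by
    rw [show (1:ℝ) = Real.sqrt 1 from Real.sqrt_one.symm]
    exact Real.sqrt_le_sqrt ha
  set U : ℕ → ℝ := fun l => mom h ((l:ℝ) + α1) f * lam ^ (a * l) / Real.Gamma (a * l + 1)
    with hUdef
  set V : ℕ → ℝ := fun j => mom h ((j:ℝ) + (α1 + β1)) f * lam ^ (a * j) /
    Real.Gamma (a * j + 1) with hVdef
  have hGpos : ∀ m : ℕ, 0 < Real.Gamma (a * m + 1) := fun m =>
    Real.Gamma_pos_of_pos (by positivity)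
  have hU : ∀ i, 0 ≤ U i := fun i => div_nonneg
    (mul_nonneg (mom_nonneg _ _ _ hh hf) (Real.rpow_nonneg hlam.le _)) (hGpos i).le
  have hV : ∀ i, 0 ≤ V i := fun i => div_nonneg
    (mul_nonneg (mom_nonneg _ _ _ hh hf) (Real.rpow_nonneg hlam.le _)) (hGpos i).le
  have hemlU : emlN h n a α1 lam f = ∑ l ∈ Finset.Icc 1 n, U l := rfl
  have hemlV : emlN h n a (α1 + β1) lam f = ∑ j ∈ Finset.Icc 1 n, V j := rfl
  have hterm : ∀ k ∈ Finset.Icc 1 n, ∀ l ∈ Finset.Ico 1 k,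
      (k.choose l : ℝ) * mom h (α1 + l) f * mom h (α1 + β1 + ((k : ℝ) - l)) f *
          lam ^ (a * k) / Real.Gamma (a * k + 1)
        ≤ 2 * Real.sqrt a * (U l * V (k - l)) := by
    intro k hk l hl
    rw [Finset.mem_Icc] at hk
    rw [Finset.mem_Ico] at hl
    have hJ : ((k - l : ℕ) : ℝ) = (k : ℝ) - (l : ℝ) := by
      push_cast [Nat.cast_sub hl.2.le]; ring
    have key := choose_gamma_le ha hl.1 hl.2
    have P1 := hGpos l
    have P2 := hGpos (k - l)
    have P := hGpos k
    rw [hJ] at P2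
    have key' : (k.choose l : ℝ) * Real.Gamma (a * l + 1) *
        Real.Gamma (a * ((k:ℝ) - l) + 1) ≤ Real.Gamma (a * k + 1) := key
    have base : (k.choose l : ℝ) / Real.Gamma (a * k + 1)
        ≤ 2 * Real.sqrt a / (Real.Gamma (a * l + 1) * Real.Gamma (a * ((k:ℝ) - l) + 1)) := by
      rw [div_le_div_iff₀ P (by positivity)]
      calc (k.choose l : ℝ) * (Real.Gamma (a * l + 1) * Real.Gamma (a * ((k:ℝ) - l) + 1))
          = (k.choose l : ℝ) * Real.Gamma (a * l + 1) * Real.Gamma (a * ((k:ℝ) - l) + 1) := by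
            ring
        _ ≤ Real.Gamma (a * k + 1) := key'
        _ = 1 * Real.Gamma (a * k + 1) := (one_mul _).symm
        _ ≤ 2 * Real.sqrt a * Real.Gamma (a * k + 1) :=
            mul_le_mul_of_nonneg_right (by linarith) P.le
    have hUl : U l = mom h (α1 + (l:ℝ)) f * lam ^ (a * l) / Real.Gamma (a * l + 1) := by
      rw [hUdef]; simp only []; rw [add_comm (l:ℝ) α1]
    have hVkl : V (k - l) = mom h (α1 + β1 + ((k:ℝ) - l)) f * lam ^ (a * ((k:ℝ) - l)) /
        Real.Gamma (a * ((k:ℝ) - l) + 1) := by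
      rw [hVdef]; simp only []; rw [hJ, add_comm ((k:ℝ) - (l:ℝ)) (α1 + β1)]
    have hpow : lam ^ (a * (k:ℝ)) = lam ^ (a * (l:ℝ)) * lam ^ (a * ((k:ℝ) - (l:ℝ))) := by
      rw [← Real.rpow_add hlam]; congr 1; ring
    rw [hUl, hVkl, hpow]
    have hM1 : 0 ≤ mom h (α1 + (l:ℝ)) f := mom_nonneg _ _ _ hh hf
    have hM2 : 0 ≤ mom h (α1 + β1 + ((k:ℝ) - l)) f := mom_nonneg _ _ _ hh hf
    have hx1 : 0 ≤ lam ^ (a * (l:ℝ)) := Real.rpow_nonneg hlam.le _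
    have hx2 : 0 ≤ lam ^ (a * ((k:ℝ) - (l:ℝ))) := Real.rpow_nonneg hlam.le _
    calc (k.choose l : ℝ) * mom h (α1 + l) f * mom h (α1 + β1 + ((k : ℝ) - l)) f *
          (lam ^ (a * (l:ℝ)) * lam ^ (a * ((k:ℝ) - (l:ℝ)))) / Real.Gamma (a * k + 1)
        = ((k.choose l : ℝ) / Real.Gamma (a * k + 1)) *
            (mom h (α1 + l) f * mom h (α1 + β1 + ((k : ℝ) - l)) f *
              (lam ^ (a * (l:ℝ)) * lam ^ (a * ((k:ℝ) - (l:ℝ))))) := by ring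
      _ ≤ (2 * Real.sqrt a / (Real.Gamma (a * l + 1) * Real.Gamma (a * ((k:ℝ) - l) + 1))) *
            (mom h (α1 + l) f * mom h (α1 + β1 + ((k : ℝ) - l)) f *
              (lam ^ (a * (l:ℝ)) * lam ^ (a * ((k:ℝ) - (l:ℝ))))) := by
          apply mul_le_mul_of_nonneg_right base
          positivity
      _ = 2 * Real.sqrt a * (mom h (α1 + (l:ℝ)) f * lam ^ (a * (l:ℝ)) /
            Real.Gamma (a * l + 1) * (mom h (α1 + β1 + ((k:ℝ) - l)) f *
              lam ^ (a * ((k:ℝ) - (l:ℝ))) / Real.Gamma (a * ((k:ℝ) - l) + 1))) := by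
          field_simp
  calc ∑ k ∈ Finset.Icc 1 n, ∑ l ∈ Finset.Ico 1 k,
        (k.choose l : ℝ) * mom h (α1 + l) f * mom h (α1 + β1 + ((k : ℝ) - l)) f *
          lam ^ (a * k) / Real.Gamma (a * k + 1)
      ≤ ∑ k ∈ Finset.Icc 1 n, ∑ l ∈ Finset.Ico 1 k, 2 * Real.sqrt a * (U l * V (k - l)) :=
        Finset.sum_le_sum fun k hk => Finset.sum_le_sum (hterm k hk)
    _ = 2 * Real.sqrt a * ∑ k ∈ Finset.Icc 1 n, ∑ l ∈ Finset.Ico 1 k, U l * V (k - l) := by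
        simp_rw [← Finset.mul_sum]
    _ ≤ 2 * Real.sqrt a * ((∑ l ∈ Finset.Icc 1 n, U l) * (∑ j ∈ Finset.Icc 1 n, V j)) := by
        apply mul_le_mul_of_nonneg_left (double_sum_le n U V hU hV)
        positivity
    _ = 2 * Real.sqrt a * emlN h n a α1 lam f * emlN h n a (α1 + β1) lam f := by
        rw [hemlU, hemlV]; ring
end

section
/- Combinatorial moment estimate: let f : ℕ → ℝ≥0 have all moments finite and let k ≥ 1 be an integer. Then m_k⟨S[f]⟩ ≤ 2^{β1+1} ∑_{l=1}^{k−1} C(k,l) · m_{α1+l}⟨f⟩ · m_{α1+β1+k−l}⟨f⟩. -/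
/-- Symmetric interaction kernel `K(x,y) = x^α y^α (x+y)^β`. -/
noncomputable def Kker (α β : ℝ) (x y : ℝ) : ℝ := x ^ α * y ^ α * (x + y) ^ β

/-- The operator `S^{(1)}`:
`S_i^{(1)}[f] = ∑_{j=1}^{i-1} K_1(jh,(i-j)h) f_j f_{i-j} - 2 ∑_{j≥1} K_1(ih,jh) f_i f_j`. -/
noncomputable def Sop1 (h α β : ℝ) (f : ℕ → ℝ) (i : ℕ) : ℝ :=
  (∑ j ∈ Finset.Ico 1 i, Kker α β ((j : ℝ) * h) (((i - j : ℕ) : ℝ) * h) * f j * f (i - j))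
    - 2 * ∑' j : ℕ, Kker α β ((i : ℝ) * h) (((j : ℝ) + 1) * h) * f i * f (j + 1)

/-- The common form of the operators `S^{(2)}` and `S^{(3)}`:
`-∑_{j=1}^{i-1} K((i-j)h,jh) f_i f_j + ∑_{j>i} K((j-i)h,ih) f_i f_j
  + ∑_{j>i} K(ih,(j-i)h) f_j f_{j-i}`. -/
noncomputable def Sop23 (h α β : ℝ) (f : ℕ → ℝ) (i : ℕ) : ℝ :=
  -(∑ j ∈ Finset.Ico 1 i, Kker α β (((i - j : ℕ) : ℝ) * h) ((j : ℝ) * h) * f i * f j)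
    + (∑' j : ℕ, Kker α β (((j : ℝ) + 1) * h) ((i : ℝ) * h) * f i * f (i + j + 1))
    + ∑' j : ℕ, Kker α β ((i : ℝ) * h) (((j : ℝ) + 1) * h) * f (i + j + 1) * f (j + 1)

/-- The full discrete 3-wave interaction operator `S = S^{(1)} + S^{(2)} + S^{(3)}`. -/
noncomputable def Sfull (h α1 β1 α2 β2 α3 β3 : ℝ) (f : ℕ → ℝ) (i : ℕ) : ℝ :=
  Sop1 h α1 β1 f i + Sop23 h α2 β2 f i + Sop23 h α3 β3 f i

noncomputable def xm (h : ℝ) (i : ℕ) : ℝ := ((i : ℝ) + 1) * h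

lemma xm_pos {h : ℝ} (hh : 0 < h) (i : ℕ) : 0 < xm h i := by
  unfold xm; positivity

lemma xm_mono {h : ℝ} (hh : 0 < h) {i j : ℕ} (hij : i ≤ j) : xm h i ≤ xm h j := by
  unfold xm
  have : (i:ℝ) ≤ j := Nat.cast_le.mpr hij
  nlinarith

lemma xm_add (h : ℝ) (p q : ℕ) : xm h (p + q + 1) = xm h p + xm h q := by
  unfold xm; push_cast; ring

lemma Kker_comm (α β x y : ℝ) : Kker α β x y = Kker α β y x := by
  unfold Kker; rw [add_comm]; ring

lemma Kker_nonneg {x y : ℝ} (α β : ℝ) (hx : 0 ≤ x) (hy : 0 ≤ y) : 0 ≤ Kker α β x y := by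
  unfold Kker; positivity

lemma pow_add_le_add_pow {u v : ℝ} (hu : 0 ≤ u) (hv : 0 ≤ v) {k : ℕ} (hk : 1 ≤ k) :
    u ^ k + v ^ k ≤ (u + v) ^ k := by
  obtain ⟨n, rfl⟩ : ∃ n, k = n + 1 := ⟨k - 1, by omega⟩
  have h1 : u ^ (n + 1) ≤ u * (u + v) ^ n := by
    rw [pow_succ']
    exact mul_le_mul_of_nonneg_left (pow_le_pow_left₀ hu (by linarith) n) hu
  have h2 : v ^ (n + 1) ≤ v * (u + v) ^ n := by
    rw [pow_succ']
    exact mul_le_mul_of_nonneg_left (pow_le_pow_left₀ hv (by linarith) n) hv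
  calc u ^ (n+1) + v ^ (n+1) ≤ u * (u+v)^n + v * (u+v)^n := add_le_add h1 h2
    _ = (u+v)^(n+1) := by rw [pow_succ]; ring

lemma rpow_sum_le {u v r : ℝ} (hu : 0 ≤ u) (hv : 0 ≤ v) (hr : 0 ≤ r) :
    (u + v) ^ r ≤ 2 ^ r * (u ^ r + v ^ r) := by
  have h1 : u + v ≤ 2 * max u v := by
    rcases le_total u v with hc | hc
    · rw [max_eq_right hc]; linarith
    · rw [max_eq_left hc]; linarith
  have h0 : (0:ℝ) ≤ max u v := le_max_of_le_left hu
  calc (u + v) ^ r ≤ (2 * max u v) ^ r :=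
        Real.rpow_le_rpow (by linarith) h1 hr
    _ = 2 ^ r * (max u v) ^ r := Real.mul_rpow (by norm_num) h0
    _ ≤ 2 ^ r * (u ^ r + v ^ r) := by
        apply mul_le_mul_of_nonneg_left _ (by positivity)
        rcases le_total u v with hc | hc
        · rw [max_eq_right hc]
          exact le_add_of_nonneg_left (Real.rpow_nonneg hu r)
        · rw [max_eq_left hc]
          exact le_add_of_nonneg_right (Real.rpow_nonneg hv r)

lemma add_pow_sub_eq (t s : ℝ) {k : ℕ} (hk : 1 ≤ k) :
    (t + s) ^ k - t ^ k - s ^ k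
      = ∑ l ∈ Finset.Ico 1 k, (k.choose l : ℝ) * (t ^ l * s ^ (k - l)) := by
  rw [add_pow, Finset.range_eq_Ico]
  rw [Finset.sum_Ico_succ_top (Nat.zero_le k), Finset.sum_eq_sum_Ico_succ_bot (show 0 < k from hk)]
  simp only [pow_zero, Nat.sub_zero, Nat.choose_zero_right, Nat.choose_self, Nat.cast_one,
    one_mul, mul_one, Nat.sub_self]
  have hc : ∑ l ∈ Finset.Ico 1 k, t ^ l * s ^ (k - l) * (k.choose l : ℝ)
      = ∑ l ∈ Finset.Ico 1 k, (k.choose l : ℝ) * (t ^ l * s ^ (k - l)) :=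
    Finset.sum_congr rfl fun l _ => by ring
  linarith [hc]

lemma fiber_hasSum {F : ℕ × ℕ → ℝ} (hS : Summable F) :
    HasSum (fun i : ℕ => ∑' j, F (i, j)) (∑' z, F z) :=
  hS.hasSum.prod_fiberwise fun b => (hS.prod_factor b).hasSum

lemma conv_hasSum {F : ℕ × ℕ → ℝ} (hS : Summable F) :
    HasSum (fun i : ℕ => ∑ j ∈ Finset.Ico 1 (i + 1), F (j - 1, i - j)) (∑' z, F z) := by
  classical
  set σ : ℕ × ℕ → ℕ × ℕ := fun p => (p.1 + p.2 + 1, p.1 + 1) with hσ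
  set g : ℕ × ℕ → ℝ := fun w => if 1 ≤ w.2 ∧ w.2 ≤ w.1 then F (w.2 - 1, w.1 - w.2) else 0 with hg
  have hinj : Function.Injective σ := by
    intro p q hpq
    simp only [hσ, Prod.mk.injEq] at hpq
    have h1 : p.1 = q.1 := by omega
    have h2 : p.2 = q.2 := by omega
    exact Prod.ext h1 h2
  have hcomp : ∀ p : ℕ × ℕ, g (σ p) = F p := by
    intro p
    simp only [hσ, hg]
    rw [if_pos ⟨by omega, by omega⟩]
    have e : (p.1 + 1 - 1, p.1 + p.2 + 1 - (p.1 + 1)) = p := Prod.ext (by omega) (by omega)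
    rw [e]
  have hzero : ∀ w, w ∉ Set.range σ → g w = 0 := by
    intro w hw
    rw [hg]; dsimp only
    rw [if_neg]
    intro hc
    exact hw ⟨(w.2 - 1, w.1 - w.2), Prod.ext (by simp [hσ]; omega) (by simp [hσ]; omega)⟩
  have hgsum : Summable g := by
    refine (hinj.summable_iff hzero).mp ?_
    exact hS.congr fun p => (hcomp p).symm
  have hsupp : Function.support g ⊆ Set.range σ := by
    intro w hw
    by_contra hr
    exact hw (hzero w hr)
  have htsum : (∑' w, g w) = ∑' z, F z := by
    rw [← hinj.tsum_eq hsupp]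
    exact tsum_congr hcomp
  have hfib : HasSum (fun i : ℕ => ∑' j, g (i, j)) (∑' w, g w) :=
    hgsum.hasSum.prod_fiberwise fun b => (hgsum.prod_factor b).hasSum
  have hinner : ∀ i : ℕ, (∑' j, g (i, j)) = ∑ j ∈ Finset.Ico 1 (i+1), F (j - 1, i - j) := by
    intro i
    rw [tsum_eq_sum (s := Finset.Ico 1 (i+1)) ?_]
    · refine Finset.sum_congr rfl fun j hj => ?_
      rw [Finset.mem_Ico] at hj
      rw [hg]; dsimp only; rw [if_pos ⟨hj.1, by omega⟩]
    · intro j hj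
      rw [Finset.mem_Ico] at hj
      rw [hg]; dsimp only; rw [if_neg (by omega)]
  rw [htsum] at hfib
  simp only [hinner] at hfib
  exact hfib


set_option maxHeartbeats 1600000 in
/-- Combinatorial moment estimate: for `f ≥ 0` with all moments finite and an
integer `k ≥ 1`,
`m_k⟨S[f]⟩ ≤ 2^{β1+1} ∑_{l=1}^{k-1} C(k,l) m_{α1+l}⟨f⟩ m_{α1+β1+k-l}⟨f⟩`. -/
theorem stmt_13 (h α1 β1 α2 β2 α3 β3 : ℝ) (k : ℕ) (f : ℕ → ℝ)
    (hh : 0 < h) (hα1 : 0 ≤ α1) (hβ1 : 0 ≤ β1) (hα2 : 0 ≤ α2) (hβ2 : 0 ≤ β2)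
    (hα3 : 0 ≤ α3) (hβ3 : 0 ≤ β3) (hf : ∀ i, 0 ≤ f i) (hk : 1 ≤ k)
    (hmom : ∀ r : ℝ, Summable (fun i : ℕ => f (i + 1) * (((i : ℝ) + 1) * h) ^ r)) :
    mom h k (Sfull h α1 β1 α2 β2 α3 β3 f) ≤
      (2 : ℝ) ^ (β1 + 1) * ∑ l ∈ Finset.Ico 1 k,
        (k.choose l : ℝ) * mom h (α1 + l) f * mom h (α1 + β1 + ((k : ℝ) - l)) f := by
  have hxp : ∀ i, 0 < xm h i := xm_pos hh
  have hxn : ∀ i, 0 ≤ xm h i := fun i => (hxp i).le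
  have hm : ∀ r : ℝ, Summable (fun i : ℕ => f (i+1) * xm h i ^ r) := hmom
  have hterm : ∀ (r : ℝ) (i : ℕ), 0 ≤ f (i+1) * xm h i ^ r :=
    fun r i => mul_nonneg (hf _) (Real.rpow_nonneg (hxn i) r)
  have momr : ∀ r : ℝ, mom h r f = ∑' i, f (i+1) * xm h i ^ r := fun r => rfl
  -- product formula
  have hprodsum : ∀ r s : ℝ, Summable (fun z : ℕ × ℕ =>
      (f (z.1+1) * xm h z.1 ^ r) * (f (z.2+1) * xm h z.2 ^ s)) :=
    fun r s => (hm r).mul_of_nonneg (hm s) (hterm r) (hterm s)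
  have hfact : ∀ r s : ℝ,
      (∑' z : ℕ × ℕ, (f (z.1+1) * xm h z.1 ^ r) * (f (z.2+1) * xm h z.2 ^ s))
        = mom h r f * mom h s f := by
    intro r s
    rw [← (fiber_hasSum (hprodsum r s)).tsum_eq]
    calc (∑' i, ∑' j, (f (i+1) * xm h i ^ r) * (f (j+1) * xm h j ^ s))
        = ∑' i, (f (i+1) * xm h i ^ r) * ∑' j, (f (j+1) * xm h j ^ s) :=
          tsum_congr fun i => tsum_mul_left
      _ = (∑' i, f (i+1) * xm h i ^ r) * ∑' j, (f (j+1) * xm h j ^ s) := tsum_mul_right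
      _ = _ := by rw [momr r, momr s]
  -- master summability
  have hM : ∀ α β : ℝ, 0 ≤ β → Summable (fun z : ℕ × ℕ =>
      (f (z.1+1) * xm h z.1 ^ α) * (f (z.2+1) * xm h z.2 ^ α) * (xm h z.1 + xm h z.2) ^ β) := by
    intro α β hβ'
    have hbig : Summable (fun z : ℕ × ℕ => (2:ℝ) ^ β *
        ((f (z.1+1) * xm h z.1 ^ (α+β)) * (f (z.2+1) * xm h z.2 ^ α)
          + (f (z.1+1) * xm h z.1 ^ α) * (f (z.2+1) * xm h z.2 ^ (α+β)))) :=
      ((hprodsum (α+β) α).add (hprodsum α (α+β))).mul_left _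
    refine Summable.of_nonneg_of_le (fun z => ?_) (fun z => ?_) hbig
    · exact mul_nonneg (mul_nonneg (hterm _ _) (hterm _ _))
        (Real.rpow_nonneg (add_nonneg (hxn _) (hxn _)) _)
    · have hb := rpow_sum_le (hxn z.1) (hxn z.2) hβ'
      calc (f (z.1+1) * xm h z.1 ^ α) * (f (z.2+1) * xm h z.2 ^ α) * (xm h z.1 + xm h z.2) ^ β
          ≤ (f (z.1+1) * xm h z.1 ^ α) * (f (z.2+1) * xm h z.2 ^ α)
              * (2 ^ β * (xm h z.1 ^ β + xm h z.2 ^ β)) :=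
            mul_le_mul_of_nonneg_left hb (mul_nonneg (hterm _ _) (hterm _ _))
        _ = _ := by rw [Real.rpow_add (hxp z.1), Real.rpow_add (hxp z.2)]; ring
  -- superadditivity of φ
  have hsuper : ∀ p q : ℕ, xm h p ^ (k:ℝ) + xm h q ^ (k:ℝ) ≤ xm h (p+q+1) ^ (k:ℝ) := by
    intro p q
    rw [Real.rpow_natCast, Real.rpow_natCast, Real.rpow_natCast, xm_add]
    exact pow_add_le_add_pow (hxn p) (hxn q) hk
  -- Sop23 part
  have hS23 : ∀ α β : ℝ, 0 ≤ α → 0 ≤ β →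
      Summable (fun i : ℕ => Sop23 h α β f (i+1) * xm h i ^ (k:ℝ)) ∧
      (∑' i : ℕ, Sop23 h α β f (i+1) * xm h i ^ (k:ℝ)) ≤ 0 := by
    intro α β hα hβ
    set FN : ℕ × ℕ → ℝ := fun z =>
      Kker α β (xm h z.2) (xm h z.1) * f (z.1+z.2+1+1) * f (z.1+1) * xm h (z.1+z.2+1) ^ (k:ℝ) with hFNdef
    set FP2 : ℕ × ℕ → ℝ := fun z =>
      Kker α β (xm h z.2) (xm h z.1) * f (z.1+1) * f (z.1+z.2+1+1) * xm h z.1 ^ (k:ℝ) with hFP2def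
    set FP3 : ℕ × ℕ → ℝ := fun z =>
      Kker α β (xm h z.1) (xm h z.2) * f (z.1+z.2+1+1) * f (z.2+1) * xm h z.1 ^ (k:ℝ) with hFP3def
    have hFNnn : ∀ z : ℕ × ℕ, 0 ≤ FN z := fun z => by
      simp only [hFNdef]
      exact mul_nonneg (mul_nonneg (mul_nonneg (Kker_nonneg α β (hxn _) (hxn _)) (hf _)) (hf _))
        (Real.rpow_nonneg (hxn _) _)
    have hFP2nn : ∀ z : ℕ × ℕ, 0 ≤ FP2 z := fun z => by
      simp only [hFP2def]
      exact mul_nonneg (mul_nonneg (mul_nonneg (Kker_nonneg α β (hxn _) (hxn _)) (hf _)) (hf _))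
        (Real.rpow_nonneg (hxn _) _)
    have hFP3nn : ∀ z : ℕ × ℕ, 0 ≤ FP3 z := fun z => by
      simp only [hFP3def]
      exact mul_nonneg (mul_nonneg (mul_nonneg (Kker_nonneg α β (hxn _) (hxn _)) (hf _)) (hf _))
        (Real.rpow_nonneg (hxn _) _)
    -- bound functions
    have hUV : Summable (fun z : ℕ × ℕ =>
        (f (z.1+1) * xm h z.1 ^ α) * (f (z.1+z.2+1+1) * xm h (z.1+z.2+1) ^ (α+β+(k:ℝ)))) := by
      have base := hprodsum α (α+β+(k:ℝ))
      have hi : Function.Injective (fun z : ℕ × ℕ => ((z.1, z.1+z.2+1) : ℕ × ℕ)) := by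
        intro p q hpq
        simp only [Prod.mk.injEq] at hpq
        exact Prod.ext (by omega) (by omega)
      exact (base.comp_injective hi).congr fun z => rfl
    have hUV2 : Summable (fun z : ℕ × ℕ =>
        (f (z.2+1) * xm h z.2 ^ α) * (f (z.1+z.2+1+1) * xm h (z.1+z.2+1) ^ (α+β+(k:ℝ)))) := by
      have base := hprodsum α (α+β+(k:ℝ))
      have hi : Function.Injective (fun z : ℕ × ℕ => ((z.2, z.1+z.2+1) : ℕ × ℕ)) := by
        intro p q hpq
        simp only [Prod.mk.injEq] at hpq
        exact Prod.ext (by omega) (by omega)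
      exact (base.comp_injective hi).congr fun z => rfl
    have hxmsplit : ∀ m : ℕ, xm h m ^ (α+β+(k:ℝ)) = xm h m ^ α * xm h m ^ β * xm h m ^ (k:ℝ) := by
      intro m
      rw [Real.rpow_add (hxp m), Real.rpow_add (hxp m)]
    have hem : ∀ z : ℕ × ℕ, xm h z.2 + xm h z.1 = xm h (z.1+z.2+1) := by
      intro z; rw [xm_add]; ring
    have hFNsum : Summable FN := by
      refine Summable.of_nonneg_of_le hFNnn (fun z => ?_) hUV
      have hyx : xm h z.2 ^ α ≤ xm h (z.1+z.2+1) ^ α :=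
        Real.rpow_le_rpow (hxn _) (xm_mono hh (by omega)) hα
      have hrest : 0 ≤ xm h z.1 ^ α * xm h (z.1+z.2+1) ^ β * f (z.1+z.2+1+1) * f (z.1+1)
          * xm h (z.1+z.2+1) ^ (k:ℝ) :=
        mul_nonneg (mul_nonneg (mul_nonneg (mul_nonneg (Real.rpow_nonneg (hxn _) _)
          (Real.rpow_nonneg (hxn _) _)) (hf _)) (hf _)) (Real.rpow_nonneg (hxn _) _)
      calc FN z = xm h z.2 ^ α * (xm h z.1 ^ α * xm h (z.1+z.2+1) ^ β * f (z.1+z.2+1+1)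
            * f (z.1+1) * xm h (z.1+z.2+1) ^ (k:ℝ)) := by
            simp only [hFNdef]; unfold Kker; rw [hem z]; ring
        _ ≤ xm h (z.1+z.2+1) ^ α * (xm h z.1 ^ α * xm h (z.1+z.2+1) ^ β * f (z.1+z.2+1+1)
            * f (z.1+1) * xm h (z.1+z.2+1) ^ (k:ℝ)) := mul_le_mul_of_nonneg_right hyx hrest
        _ = _ := by rw [hxmsplit]; ring
    have hFP2sum : Summable FP2 := by
      refine Summable.of_nonneg_of_le hFP2nn (fun z => ?_) hUV
      have hyx : xm h z.2 ^ α ≤ xm h (z.1+z.2+1) ^ α :=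
        Real.rpow_le_rpow (hxn _) (xm_mono hh (by omega)) hα
      have hxk : xm h z.1 ^ (k:ℝ) ≤ xm h (z.1+z.2+1) ^ (k:ℝ) :=
        Real.rpow_le_rpow (hxn _) (xm_mono hh (by omega)) (Nat.cast_nonneg k)
      have h2 : xm h z.2 ^ α * xm h z.1 ^ (k:ℝ)
          ≤ xm h (z.1+z.2+1) ^ α * xm h (z.1+z.2+1) ^ (k:ℝ) :=
        mul_le_mul hyx hxk (Real.rpow_nonneg (hxn _) _) (Real.rpow_nonneg (hxn _) _)
      have hrest : 0 ≤ xm h z.1 ^ α * xm h (z.1+z.2+1) ^ β * f (z.1+1) * f (z.1+z.2+1+1) :=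
        mul_nonneg (mul_nonneg (mul_nonneg (Real.rpow_nonneg (hxn _) _)
          (Real.rpow_nonneg (hxn _) _)) (hf _)) (hf _)
      calc FP2 z = (xm h z.2 ^ α * xm h z.1 ^ (k:ℝ)) * (xm h z.1 ^ α * xm h (z.1+z.2+1) ^ β
            * f (z.1+1) * f (z.1+z.2+1+1)) := by
            simp only [hFP2def]; unfold Kker; rw [hem z]; ring
        _ ≤ (xm h (z.1+z.2+1) ^ α * xm h (z.1+z.2+1) ^ (k:ℝ)) * (xm h z.1 ^ α
            * xm h (z.1+z.2+1) ^ β * f (z.1+1) * f (z.1+z.2+1+1)) :=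
            mul_le_mul_of_nonneg_right h2 hrest
        _ = _ := by rw [hxmsplit]; ring
    have hFP3sum : Summable FP3 := by
      refine Summable.of_nonneg_of_le hFP3nn (fun z => ?_) hUV2
      have hxa : xm h z.1 ^ α ≤ xm h (z.1+z.2+1) ^ α :=
        Real.rpow_le_rpow (hxn _) (xm_mono hh (by omega)) hα
      have hxk : xm h z.1 ^ (k:ℝ) ≤ xm h (z.1+z.2+1) ^ (k:ℝ) :=
        Real.rpow_le_rpow (hxn _) (xm_mono hh (by omega)) (Nat.cast_nonneg k)
      have h2 : xm h z.1 ^ α * xm h z.1 ^ (k:ℝ)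
          ≤ xm h (z.1+z.2+1) ^ α * xm h (z.1+z.2+1) ^ (k:ℝ) :=
        mul_le_mul hxa hxk (Real.rpow_nonneg (hxn _) _) (Real.rpow_nonneg (hxn _) _)
      have hrest : 0 ≤ xm h z.2 ^ α * xm h (z.1+z.2+1) ^ β * f (z.1+z.2+1+1) * f (z.2+1) :=
        mul_nonneg (mul_nonneg (mul_nonneg (Real.rpow_nonneg (hxn _) _)
          (Real.rpow_nonneg (hxn _) _)) (hf _)) (hf _)
      calc FP3 z = (xm h z.1 ^ α * xm h z.1 ^ (k:ℝ)) * (xm h z.2 ^ α * xm h (z.1+z.2+1) ^ β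
            * f (z.1+z.2+1+1) * f (z.2+1)) := by
            simp only [hFP3def]; unfold Kker
            rw [show xm h z.1 + xm h z.2 = xm h (z.1+z.2+1) from (xm_add h z.1 z.2).symm]
            ring
        _ ≤ (xm h (z.1+z.2+1) ^ α * xm h (z.1+z.2+1) ^ (k:ℝ)) * (xm h z.2 ^ α
            * xm h (z.1+z.2+1) ^ β * f (z.1+z.2+1+1) * f (z.2+1)) :=
            mul_le_mul_of_nonneg_right h2 hrest
        _ = _ := by rw [hxmsplit]; ring
    -- per-i identities
    have hNi : ∀ i : ℕ,
        (∑ j ∈ Finset.Ico 1 (i+1), Kker α β (((i+1-j : ℕ) : ℝ) * h) ((j : ℝ) * h)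
            * f (i+1) * f j) * xm h i ^ (k:ℝ)
          = ∑ j ∈ Finset.Ico 1 (i+1), FN (j - 1, i - j) := by
      intro i
      rw [Finset.sum_mul]
      refine Finset.sum_congr rfl fun j hj => ?_
      rw [Finset.mem_Ico] at hj
      obtain ⟨h1j, h2j⟩ := hj
      simp only [hFNdef]
      have e3 : j - 1 + (i - j) + 1 = i := by omega
      have e4 : xm h (j-1) = (j:ℝ) * h := by
        unfold xm; rw [Nat.cast_sub h1j]; push_cast; ring
      have e5 : xm h (i-j) = ((i+1-j : ℕ) : ℝ) * h := by
        unfold xm; rw [show i+1-j = (i-j)+1 from by omega]; push_cast; ring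
      rw [e3, e4, e5, show j - 1 + 1 = j from by omega]
    have hP2i : ∀ i : ℕ,
        (∑' j : ℕ, Kker α β (((j:ℝ)+1) * h) (((i+1 : ℕ) : ℝ) * h) * f (i+1) * f ((i+1)+j+1))
            * xm h i ^ (k:ℝ)
          = ∑' j : ℕ, FP2 (i, j) := by
      intro i
      rw [← tsum_mul_right]
      refine tsum_congr fun j => ?_
      simp only [hFP2def]
      rw [show i+1+j+1 = i+j+1+1 from by omega]
      unfold xm
      push_cast
      ring
    have hP3i : ∀ i : ℕ,
        (∑' j : ℕ, Kker α β (((i+1 : ℕ) : ℝ) * h) (((j:ℝ)+1) * h) * f ((i+1)+j+1) * f (j+1))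
            * xm h i ^ (k:ℝ)
          = ∑' j : ℕ, FP3 (i, j) := by
      intro i
      rw [← tsum_mul_right]
      refine tsum_congr fun j => ?_
      simp only [hFP3def]
      rw [show i+1+j+1 = i+j+1+1 from by omega]
      unfold xm
      push_cast
      ring
    have hfun : (fun i : ℕ => Sop23 h α β f (i+1) * xm h i ^ (k:ℝ))
        = fun i : ℕ => -(∑ j ∈ Finset.Ico 1 (i+1), FN (j - 1, i - j))
            + (∑' j : ℕ, FP2 (i, j)) + ∑' j : ℕ, FP3 (i, j) := by
      funext i
      rw [← hNi i, ← hP2i i, ← hP3i i]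
      show Sop23 h α β f (i+1) * xm h i ^ (k:ℝ) = _
      rw [Sop23]
      ring
    have hsum23 : Summable (fun i : ℕ => Sop23 h α β f (i+1) * xm h i ^ (k:ℝ)) := by
      rw [hfun]
      exact (((conv_hasSum hFNsum).summable.neg).add (fiber_hasSum hFP2sum).summable).add
        (fiber_hasSum hFP3sum).summable
    refine ⟨hsum23, ?_⟩
    have hval : (∑' i : ℕ, Sop23 h α β f (i+1) * xm h i ^ (k:ℝ))
        = -(∑' z, FN z) + (∑' z, FP2 z) + ∑' z, FP3 z := by
      rw [hfun]
      rw [Summable.tsum_add (((conv_hasSum hFNsum).summable.neg).add (fiber_hasSum hFP2sum).summable)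
          (fiber_hasSum hFP3sum).summable,
        Summable.tsum_add ((conv_hasSum hFNsum).summable.neg) (fiber_hasSum hFP2sum).summable,
        tsum_neg, (conv_hasSum hFNsum).tsum_eq, (fiber_hasSum hFP2sum).tsum_eq,
        (fiber_hasSum hFP3sum).tsum_eq]
    rw [hval]
    -- key inequality
    have hswapinj : Function.Injective (fun z : ℕ × ℕ => ((z.2, z.1) : ℕ × ℕ)) := by
      intro p q hpq
      simp only [Prod.mk.injEq] at hpq
      exact Prod.ext hpq.2 hpq.1
    have hP3swapsum : Summable (fun z : ℕ × ℕ => FP3 (z.2, z.1)) :=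
      hFP3sum.comp_injective hswapinj
    have hP3swap : (∑' z : ℕ × ℕ, FP3 (z.2, z.1)) = ∑' z, FP3 z :=
      (Equiv.prodComm ℕ ℕ).tsum_eq FP3
    have hkey : (∑' z, FP2 z) + (∑' z, FP3 z) ≤ ∑' z, FN z := by
      rw [← hP3swap, ← Summable.tsum_add hFP2sum hP3swapsum]
      refine Summable.tsum_le_tsum (fun z => ?_) (hFP2sum.add hP3swapsum) hFNsum
      have hrest : 0 ≤ Kker α β (xm h z.2) (xm h z.1) * f (z.1+z.2+1+1) * f (z.1+1) :=
        mul_nonneg (mul_nonneg (Kker_nonneg α β (hxn _) (hxn _)) (hf _)) (hf _)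
      calc FP2 z + FP3 (z.2, z.1)
          = (Kker α β (xm h z.2) (xm h z.1) * f (z.1+z.2+1+1) * f (z.1+1))
              * (xm h z.1 ^ (k:ℝ) + xm h z.2 ^ (k:ℝ)) := by
            simp only [hFP2def, hFP3def]
            rw [show z.2+z.1+1+1 = z.1+z.2+1+1 from by omega]
            ring
        _ ≤ (Kker α β (xm h z.2) (xm h z.1) * f (z.1+z.2+1+1) * f (z.1+1))
              * xm h (z.1+z.2+1) ^ (k:ℝ) :=
            mul_le_mul_of_nonneg_left (hsuper z.1 z.2) hrest
        _ = FN z := by simp only [hFNdef]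
    linarith
  -- Sop1 part
  have hS1 : Summable (fun i : ℕ => Sop1 h α1 β1 f (i+1) * xm h i ^ (k:ℝ)) ∧
      (∑' i : ℕ, Sop1 h α1 β1 f (i+1) * xm h i ^ (k:ℝ)) ≤
        (2 : ℝ) ^ (β1 + 1) * ∑ l ∈ Finset.Ico 1 k,
          (k.choose l : ℝ) * mom h (α1 + l) f * mom h (α1 + β1 + ((k : ℝ) - l)) f := by
    set FA : ℕ × ℕ → ℝ := fun z =>
      Kker α1 β1 (xm h z.1) (xm h z.2) * f (z.1+1) * f (z.2+1) * xm h (z.1+z.2+1) ^ (k:ℝ) with hFAdef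
    set FB : ℕ × ℕ → ℝ := fun z =>
      Kker α1 β1 (xm h z.1) (xm h z.2) * f (z.1+1) * f (z.2+1) * xm h z.1 ^ (k:ℝ) with hFBdef
    have hKnn : ∀ z : ℕ × ℕ, 0 ≤ Kker α1 β1 (xm h z.1) (xm h z.2) * f (z.1+1) * f (z.2+1) :=
      fun z => mul_nonneg (mul_nonneg (Kker_nonneg α1 β1 (hxn _) (hxn _)) (hf _)) (hf _)
    have hFAnn : ∀ z : ℕ × ℕ, 0 ≤ FA z := fun z => by
      simp only [hFAdef]
      exact mul_nonneg (hKnn z) (Real.rpow_nonneg (hxn _) _)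
    have hFBnn : ∀ z : ℕ × ℕ, 0 ≤ FB z := fun z => by
      simp only [hFBdef]
      exact mul_nonneg (hKnn z) (Real.rpow_nonneg (hxn _) _)
    have hFAsum : Summable FA := by
      refine Summable.of_nonneg_of_le hFAnn (fun z => ?_)
        (hM α1 (β1+(k:ℝ)) (add_nonneg hβ1 (Nat.cast_nonneg k)))
      simp only [hFAdef]
      unfold Kker
      rw [xm_add, Real.rpow_add (add_pos (hxp z.1) (hxp z.2))]
      apply le_of_eq; ring
    have hFBsum : Summable FB := by
      refine Summable.of_nonneg_of_le hFBnn (fun z => ?_) hFAsum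
      simp only [hFAdef, hFBdef]
      exact mul_le_mul_of_nonneg_left
        (Real.rpow_le_rpow (hxn _) (xm_mono hh (by omega)) (Nat.cast_nonneg k)) (hKnn z)
    -- per-i identities
    have hAi : ∀ i : ℕ,
        (∑ j ∈ Finset.Ico 1 (i+1), Kker α1 β1 ((j : ℝ) * h) (((i+1-j : ℕ) : ℝ) * h)
            * f j * f (i+1-j)) * xm h i ^ (k:ℝ)
          = ∑ j ∈ Finset.Ico 1 (i+1), FA (j - 1, i - j) := by
      intro i
      rw [Finset.sum_mul]
      refine Finset.sum_congr rfl fun j hj => ?_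
      rw [Finset.mem_Ico] at hj
      obtain ⟨h1j, h2j⟩ := hj
      simp only [hFAdef]
      have e3 : j - 1 + (i - j) + 1 = i := by omega
      have e4 : xm h (j-1) = (j:ℝ) * h := by
        unfold xm; rw [Nat.cast_sub h1j]; push_cast; ring
      have e5 : xm h (i-j) = ((i+1-j : ℕ) : ℝ) * h := by
        unfold xm; rw [show i+1-j = (i-j)+1 from by omega]; push_cast; ring
      rw [e3, e4, e5, show j - 1 + 1 = j from by omega, show i - j + 1 = i + 1 - j from by omega]
    have hBi : ∀ i : ℕ,
        (∑' j : ℕ, Kker α1 β1 (((i+1 : ℕ) : ℝ) * h) (((j:ℝ)+1) * h) * f (i+1) * f (j+1))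
            * xm h i ^ (k:ℝ)
          = ∑' j : ℕ, FB (i, j) := by
      intro i
      rw [← tsum_mul_right]
      refine tsum_congr fun j => ?_
      simp only [hFBdef]
      unfold xm
      push_cast
      ring
    have hfun : (fun i : ℕ => Sop1 h α1 β1 f (i+1) * xm h i ^ (k:ℝ))
        = fun i : ℕ => (∑ j ∈ Finset.Ico 1 (i+1), FA (j - 1, i - j))
            - 2 * ∑' j : ℕ, FB (i, j) := by
      funext i
      rw [← hAi i, ← hBi i]
      show Sop1 h α1 β1 f (i+1) * xm h i ^ (k:ℝ) = _
      rw [Sop1]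
      ring
    have hs1 : Summable (fun i : ℕ => Sop1 h α1 β1 f (i+1) * xm h i ^ (k:ℝ)) := by
      rw [hfun]
      exact (conv_hasSum hFAsum).summable.sub (((fiber_hasSum hFBsum).summable).mul_left 2)
    refine ⟨hs1, ?_⟩
    have hval : (∑' i : ℕ, Sop1 h α1 β1 f (i+1) * xm h i ^ (k:ℝ))
        = (∑' z, FA z) - 2 * ∑' z, FB z := by
      rw [hfun,
        Summable.tsum_sub (conv_hasSum hFAsum).summable (((fiber_hasSum hFBsum).summable).mul_left 2),
        tsum_mul_left, (conv_hasSum hFAsum).tsum_eq, (fiber_hasSum hFBsum).tsum_eq]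
    rw [hval]
    -- symmetrize the loss term
    have hswapinj : Function.Injective (fun z : ℕ × ℕ => ((z.2, z.1) : ℕ × ℕ)) := by
      intro p q hpq
      simp only [Prod.mk.injEq] at hpq
      exact Prod.ext hpq.2 hpq.1
    have hFBswapsum : Summable (fun z : ℕ × ℕ => FB (z.2, z.1)) :=
      hFBsum.comp_injective hswapinj
    have hFBswap : (∑' z : ℕ × ℕ, FB (z.2, z.1)) = ∑' z, FB z :=
      (Equiv.prodComm ℕ ℕ).tsum_eq FB
    have hD : (∑' z, FA z) - 2 * ∑' z, FB z
        = ∑' z : ℕ × ℕ, (FA z - (FB z + FB (z.2, z.1))) := by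
      have h2 : (2:ℝ) * ∑' z, FB z = ∑' z : ℕ × ℕ, (FB z + FB (z.2, z.1)) := by
        rw [Summable.tsum_add hFBsum hFBswapsum, hFBswap]; ring
      rw [h2, ← Summable.tsum_sub hFAsum (hFBsum.add hFBswapsum)]
    rw [hD]
    -- the bound function E
    set E : ℕ × ℕ → ℝ := fun z => ∑ l ∈ Finset.Ico 1 k, (k.choose l : ℝ) *
        ((2:ℝ)^β1 * ((f (z.1+1) * xm h z.1 ^ (α1+β1+(l:ℝ))) * (f (z.2+1) * xm h z.2 ^ (α1+((k:ℝ)-(l:ℝ))))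
          + (f (z.1+1) * xm h z.1 ^ (α1+(l:ℝ))) * (f (z.2+1) * xm h z.2 ^ (α1+β1+((k:ℝ)-(l:ℝ)))))) with hEdef
    have hEsuml : ∀ l ∈ Finset.Ico 1 k, Summable (fun z : ℕ × ℕ => (k.choose l : ℝ) *
        ((2:ℝ)^β1 * ((f (z.1+1) * xm h z.1 ^ (α1+β1+(l:ℝ))) * (f (z.2+1) * xm h z.2 ^ (α1+((k:ℝ)-(l:ℝ))))
          + (f (z.1+1) * xm h z.1 ^ (α1+(l:ℝ))) * (f (z.2+1) * xm h z.2 ^ (α1+β1+((k:ℝ)-(l:ℝ))))))) :=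
      fun l _ => ((((hprodsum (α1+β1+(l:ℝ)) (α1+((k:ℝ)-(l:ℝ)))).add
        (hprodsum (α1+(l:ℝ)) (α1+β1+((k:ℝ)-(l:ℝ))))).mul_left _).mul_left _)
    have hEsum : Summable E := by
      rw [hEdef]
      exact summable_sum hEsuml
    have hDsum : Summable (fun z : ℕ × ℕ => FA z - (FB z + FB (z.2, z.1))) :=
      hFAsum.sub (hFBsum.add hFBswapsum)
    -- pointwise bound
    have hDle : ∀ z : ℕ × ℕ, FA z - (FB z + FB (z.2, z.1)) ≤ E z := by
      intro z
      have hDz : FA z - (FB z + FB (z.2, z.1))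
          = ∑ l ∈ Finset.Ico 1 k, Kker α1 β1 (xm h z.1) (xm h z.2) * f (z.1+1) * f (z.2+1)
              * ((k.choose l : ℝ) * (xm h z.1 ^ l * xm h z.2 ^ (k - l))) := by
        have hb := add_pow_sub_eq (xm h z.1) (xm h z.2) hk
        calc FA z - (FB z + FB (z.2, z.1))
            = Kker α1 β1 (xm h z.1) (xm h z.2) * f (z.1+1) * f (z.2+1)
                * ((xm h z.1 + xm h z.2) ^ k - xm h z.1 ^ k - xm h z.2 ^ k) := by
              simp only [hFAdef, hFBdef]
              rw [Kker_comm α1 β1 (xm h z.2) (xm h z.1)]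
              rw [xm_add, Real.rpow_natCast, Real.rpow_natCast, Real.rpow_natCast]
              ring
          _ = Kker α1 β1 (xm h z.1) (xm h z.2) * f (z.1+1) * f (z.2+1)
                * ∑ l ∈ Finset.Ico 1 k, (k.choose l : ℝ) * (xm h z.1 ^ l * xm h z.2 ^ (k - l)) := by
              rw [hb]
          _ = _ := by
              rw [Finset.mul_sum]
      rw [hDz]
      simp only [hEdef]
      refine Finset.sum_le_sum fun l hl => ?_
      rw [Finset.mem_Ico] at hl
      obtain ⟨hl1, hlk⟩ := hl
      have hC : (0:ℝ) ≤ (k.choose l : ℝ) := Nat.cast_nonneg _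
      have eX1 : xm h z.1 ^ (α1+β1+(l:ℝ)) = xm h z.1 ^ α1 * xm h z.1 ^ β1 * xm h z.1 ^ l := by
        rw [Real.rpow_add (hxp z.1), Real.rpow_add (hxp z.1), Real.rpow_natCast]
      have eX2 : xm h z.1 ^ (α1+(l:ℝ)) = xm h z.1 ^ α1 * xm h z.1 ^ l := by
        rw [Real.rpow_add (hxp z.1), Real.rpow_natCast]
      have ekl : ((k:ℝ) - (l:ℝ)) = ((k - l : ℕ) : ℝ) := (Nat.cast_sub hlk.le).symm
      have eY1 : xm h z.2 ^ (α1+((k:ℝ)-(l:ℝ))) = xm h z.2 ^ α1 * xm h z.2 ^ (k-l) := by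
        rw [Real.rpow_add (hxp z.2), ekl, Real.rpow_natCast]
      have eY2 : xm h z.2 ^ (α1+β1+((k:ℝ)-(l:ℝ)))
          = xm h z.2 ^ α1 * xm h z.2 ^ β1 * xm h z.2 ^ (k-l) := by
        rw [Real.rpow_add (hxp z.2), Real.rpow_add (hxp z.2), ekl, Real.rpow_natCast]
      have hbb : (xm h z.1 + xm h z.2) ^ β1 ≤ 2 ^ β1 * (xm h z.1 ^ β1 + xm h z.2 ^ β1) :=
        rpow_sum_le (hxn z.1) (hxn z.2) hβ1
      have hM0 : 0 ≤ (k.choose l : ℝ) * (xm h z.1 ^ α1 * xm h z.2 ^ α1 * f (z.1+1) * f (z.2+1)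
          * (xm h z.1 ^ l * xm h z.2 ^ (k-l))) :=
        mul_nonneg hC (mul_nonneg (mul_nonneg (mul_nonneg (mul_nonneg
          (Real.rpow_nonneg (hxn _) _) (Real.rpow_nonneg (hxn _) _)) (hf _)) (hf _))
          (mul_nonneg (pow_nonneg (hxn _) _) (pow_nonneg (hxn _) _)))
      calc Kker α1 β1 (xm h z.1) (xm h z.2) * f (z.1+1) * f (z.2+1)
              * ((k.choose l : ℝ) * (xm h z.1 ^ l * xm h z.2 ^ (k - l)))
          = (xm h z.1 + xm h z.2) ^ β1 * ((k.choose l : ℝ) * (xm h z.1 ^ α1 * xm h z.2 ^ α1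
              * f (z.1+1) * f (z.2+1) * (xm h z.1 ^ l * xm h z.2 ^ (k-l)))) := by
            unfold Kker; ring
        _ ≤ (2 ^ β1 * (xm h z.1 ^ β1 + xm h z.2 ^ β1)) * ((k.choose l : ℝ) * (xm h z.1 ^ α1
              * xm h z.2 ^ α1 * f (z.1+1) * f (z.2+1) * (xm h z.1 ^ l * xm h z.2 ^ (k-l)))) :=
            mul_le_mul_of_nonneg_right hbb hM0
        _ = _ := by
            rw [eX1, eX2, eY1, eY2]; ring
    have hDE : (∑' z : ℕ × ℕ, (FA z - (FB z + FB (z.2, z.1)))) ≤ ∑' z, E z :=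
      Summable.tsum_le_tsum hDle hDsum hEsum
    refine le_trans hDE ?_
    -- evaluate ∑' E
    have hEval : (∑' z, E z) = ∑ l ∈ Finset.Ico 1 k, (k.choose l : ℝ) *
        ((2:ℝ)^β1 * (mom h (α1+β1+(l:ℝ)) f * mom h (α1+((k:ℝ)-(l:ℝ))) f
          + mom h (α1+(l:ℝ)) f * mom h (α1+β1+((k:ℝ)-(l:ℝ))) f)) := by
      rw [hEdef]
      rw [Summable.tsum_finsetSum hEsuml]
      refine Finset.sum_congr rfl fun l hl => ?_
      rw [tsum_mul_left, tsum_mul_left,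
        Summable.tsum_add (hprodsum (α1+β1+(l:ℝ)) (α1+((k:ℝ)-(l:ℝ)))) (hprodsum (α1+(l:ℝ)) (α1+β1+((k:ℝ)-(l:ℝ)))),
        hfact, hfact]
    rw [hEval]
    -- reflection symmetry
    have hrefl : ∑ l ∈ Finset.Ico 1 k, (k.choose l : ℝ)
          * (mom h (α1+β1+(l:ℝ)) f * mom h (α1+((k:ℝ)-(l:ℝ))) f)
        = ∑ l ∈ Finset.Ico 1 k, (k.choose l : ℝ)
          * (mom h (α1+(l:ℝ)) f * mom h (α1+β1+((k:ℝ)-(l:ℝ))) f) := by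
      refine Finset.sum_nbij' (fun l => k - l) (fun l => k - l) ?_ ?_ ?_ ?_ ?_
      · intro a ha; simp only [Finset.mem_Ico] at ha ⊢; omega
      · intro a ha; simp only [Finset.mem_Ico] at ha ⊢; omega
      · intro a ha; simp only [Finset.mem_Ico] at ha; omega
      · intro a ha; simp only [Finset.mem_Ico] at ha; omega
      · intro a ha
        simp only [Finset.mem_Ico] at ha
        rw [Nat.choose_symm ha.2.le, Nat.cast_sub ha.2.le]
        rw [show α1 + β1 + ((k:ℝ) - ((k:ℝ) - (a:ℝ))) = α1 + β1 + (a:ℝ) from by ring]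
        ring
    have hfinal : ∑ l ∈ Finset.Ico 1 k, (k.choose l : ℝ) *
        ((2:ℝ)^β1 * (mom h (α1+β1+(l:ℝ)) f * mom h (α1+((k:ℝ)-(l:ℝ))) f
          + mom h (α1+(l:ℝ)) f * mom h (α1+β1+((k:ℝ)-(l:ℝ))) f))
        = (2:ℝ)^β1 * ((∑ l ∈ Finset.Ico 1 k, (k.choose l : ℝ)
            * (mom h (α1+β1+(l:ℝ)) f * mom h (α1+((k:ℝ)-(l:ℝ))) f))
          + ∑ l ∈ Finset.Ico 1 k, (k.choose l : ℝ)
            * (mom h (α1+(l:ℝ)) f * mom h (α1+β1+((k:ℝ)-(l:ℝ))) f)) := by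
      rw [← Finset.sum_add_distrib, Finset.mul_sum]
      exact Finset.sum_congr rfl fun l _ => by ring
    rw [hfinal, hrefl]
    have h2p : (2:ℝ) ^ (β1+1) = (2:ℝ) ^ β1 * 2 := by
      rw [Real.rpow_add (by norm_num : (0:ℝ) < 2), Real.rpow_one]
    apply le_of_eq
    rw [h2p, ← Finset.sum_add_distrib, Finset.mul_sum, Finset.mul_sum]
    exact Finset.sum_congr rfl fun l hl => by ring
  -- assembly
  obtain ⟨hs2, hv2⟩ := hS23 α2 β2 hα2 hβ2
  obtain ⟨hs3, hv3⟩ := hS23 α3 β3 hα3 hβ3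
  obtain ⟨hs1, hv1⟩ := hS1
  have hmomeq : mom h (k:ℝ) (Sfull h α1 β1 α2 β2 α3 β3 f)
      = ∑' i : ℕ, (Sop1 h α1 β1 f (i+1) * xm h i ^ (k:ℝ)
          + Sop23 h α2 β2 f (i+1) * xm h i ^ (k:ℝ)
          + Sop23 h α3 β3 f (i+1) * xm h i ^ (k:ℝ)) := by
    rw [mom]
    refine tsum_congr fun i => ?_
    show Sfull h α1 β1 α2 β2 α3 β3 f (i+1) * xm h i ^ (k:ℝ) = _
    rw [Sfull]; ring
  rw [hmomeq, Summable.tsum_add (hs1.add hs2) hs3, Summable.tsum_add hs1 hs2]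
  linarith
end

section
/- Shifted Mittag–Leffler moment lower bound: let f : ℕ → ℝ≥0, h > 0, a ≥ 1, δ > 1 and 0 < λ. Then ℰ^∞_{a,δ}(λ)⟨f⟩ ≥ λ^{−δa} · ℰ^∞_a(λ)⟨f⟩ − λ^{−(δ−1)a} · m_1⟨f⟩ · ℰ_a(1), provided all quantities are finite. -/
/-- The shifted Mittag–Leffler moment
`ℰ^∞_{a,ρ}(λ)⟨f⟩ = ∑_{k≥1} m_{k+ρ}⟨f⟩ λ^{ak}/Γ(ak+1)`. -/
noncomputable def mlMomTerm (h a ρ lam : ℝ) (f : ℕ → ℝ) (k : ℕ) : ℝ :=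
  mom h (((k : ℝ) + 1) + ρ) f * lam ^ (a * ((k : ℝ) + 1)) / Real.Gamma (a * ((k : ℝ) + 1) + 1)

noncomputable def mlMom (h a ρ lam : ℝ) (f : ℕ → ℝ) : ℝ :=
  ∑' k : ℕ, mlMomTerm h a ρ lam f k

/-- `ℰ_a(1) = ∑_{k≥1} 1/Γ(ak+1)`. -/
noncomputable def mlEone (a : ℝ) : ℝ := ∑' k : ℕ, 1 / Real.Gamma (a * ((k : ℝ) + 1) + 1)

-- pointwise lemma
lemma ptwise (a δ lam x : ℝ) (ha : 0 < a) (hδ : 0 < δ) (hlam : 0 < lam) (hx : 0 < x)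
    (k : ℕ) :
    lam ^ (-δ * a) * (x ^ ((k : ℝ) + 1) - lam ^ ((-a) * (k : ℝ)) * x) ≤
      x ^ (((k : ℝ) + 1) + δ) := by
  rcases le_or_gt (lam ^ (-a)) x with hc | hc
  · have h1 : lam ^ (-δ * a) ≤ x ^ δ := by
      rw [show (-δ * a) = (-a) * δ by ring, Real.rpow_mul hlam.le]
      exact Real.rpow_le_rpow (Real.rpow_nonneg hlam.le _) hc hδ.le
    have h2 : x ^ (((k : ℝ) + 1) + δ) = x ^ ((k : ℝ) + 1) * x ^ δ := Real.rpow_add hx _ _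
    have h3 : lam ^ (-δ * a) * (x ^ ((k : ℝ) + 1) - lam ^ ((-a) * (k : ℝ)) * x) ≤
        lam ^ (-δ * a) * x ^ ((k : ℝ) + 1) := by
      have : (0:ℝ) ≤ lam ^ ((-a) * (k : ℝ)) * x :=
        mul_nonneg (Real.rpow_nonneg hlam.le _) hx.le
      nlinarith [Real.rpow_nonneg hlam.le (-δ * a)]
    calc lam ^ (-δ * a) * (x ^ ((k : ℝ) + 1) - lam ^ ((-a) * (k : ℝ)) * x)
        ≤ lam ^ (-δ * a) * x ^ ((k : ℝ) + 1) := h3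
      _ ≤ x ^ δ * x ^ ((k : ℝ) + 1) := by
          exact mul_le_mul_of_nonneg_right h1 (Real.rpow_nonneg hx.le _)
      _ = x ^ (((k : ℝ) + 1) + δ) := by rw [h2]; ring
  · have h1 : x ^ ((k : ℝ) + 1) ≤ lam ^ ((-a) * (k : ℝ)) * x := by
      have hxk : x ^ (k : ℝ) ≤ (lam ^ (-a)) ^ (k : ℝ) :=
        Real.rpow_le_rpow hx.le hc.le (Nat.cast_nonneg k)
      have : x ^ ((k : ℝ) + 1) = x ^ (k : ℝ) * x := by
        rw [Real.rpow_add hx, Real.rpow_one]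
      rw [this, ← Real.rpow_mul hlam.le] at *
      exact mul_le_mul_of_nonneg_right hxk hx.le
    have h2 : lam ^ (-δ * a) * (x ^ ((k : ℝ) + 1) - lam ^ ((-a) * (k : ℝ)) * x) ≤ 0 :=
      mul_nonpos_of_nonneg_of_nonpos (Real.rpow_nonneg hlam.le _) (by linarith)
    exact h2.trans (Real.rpow_nonneg hx.le _)

/-- Shifted Mittag–Leffler moment lower bound: for `a ≥ 1`, `δ > 1`, `λ > 0`,
`ℰ^∞_{a,δ}(λ)⟨f⟩ ≥ λ^{-δa} ℰ^∞_a(λ)⟨f⟩ - λ^{-(δ-1)a} m_1⟨f⟩ ℰ_a(1)`,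
provided all the quantities involved are finite. -/
theorem stmt_16 (h a δ lam : ℝ) (f : ℕ → ℝ) (hh : 0 < h) (hf : ∀ i, 0 ≤ f i)
    (ha : 1 ≤ a) (hδ : 1 < δ) (hlam : 0 < lam)
    (hmom : ∀ r : ℝ, Summable (fun i : ℕ => f (i + 1) * (((i : ℝ) + 1) * h) ^ r))
    (hs0 : Summable (mlMomTerm h a 0 lam f))
    (hsδ : Summable (mlMomTerm h a δ lam f)) :
    lam ^ (-δ * a) * mlMom h a 0 lam f - lam ^ (-(δ - 1) * a) * mom h 1 f * mlEone a ≤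
      mlMom h a δ lam f := by
  have ha0 : (0:ℝ) < a := lt_of_lt_of_le one_pos ha
  have hδ0 : (0:ℝ) < δ := lt_trans one_pos hδ
  -- per-k moment inequality
  have key : ∀ k : ℕ,
      lam ^ (-δ * a) * mom h ((k : ℝ) + 1) f -
        lam ^ (-δ * a) * lam ^ ((-a) * (k : ℝ)) * mom h 1 f ≤
      mom h (((k : ℝ) + 1) + δ) f := by
    intro k
    have hterm : ∀ i : ℕ,
        lam ^ (-δ * a) * (f (i + 1) * (((i : ℝ) + 1) * h) ^ ((k : ℝ) + 1)) -
          lam ^ (-δ * a) * lam ^ ((-a) * (k : ℝ)) * (f (i + 1) * (((i : ℝ) + 1) * h) ^ (1:ℝ)) ≤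
        f (i + 1) * (((i : ℝ) + 1) * h) ^ (((k : ℝ) + 1) + δ) := by
      intro i
      have hx : (0:ℝ) < ((i : ℝ) + 1) * h := by positivity
      have := mul_le_mul_of_nonneg_left (ptwise a δ lam _ ha0 hδ0 hlam hx k) (hf (i + 1))
      rw [Real.rpow_one]
      calc _ = f (i + 1) * (lam ^ (-δ * a) *
              ((((i : ℝ) + 1) * h) ^ ((k : ℝ) + 1) -
                lam ^ ((-a) * (k : ℝ)) * (((i : ℝ) + 1) * h))) := by ring
        _ ≤ _ := this
    have hsumL : Summable (fun i : ℕ =>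
        lam ^ (-δ * a) * (f (i + 1) * (((i : ℝ) + 1) * h) ^ ((k : ℝ) + 1)) -
          lam ^ (-δ * a) * lam ^ ((-a) * (k : ℝ)) *
            (f (i + 1) * (((i : ℝ) + 1) * h) ^ (1:ℝ))) :=
      ((hmom ((k : ℝ) + 1)).mul_left _).sub ((hmom 1).mul_left _)
    have := Summable.tsum_le_tsum hterm hsumL (hmom _)
    rw [Summable.tsum_sub ((hmom ((k : ℝ) + 1)).mul_left _) ((hmom 1).mul_left _),
        tsum_mul_left, tsum_mul_left] at this
    exact this
  -- positivity of the weight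
  have hΓpos : ∀ k : ℕ, 0 < Real.Gamma (a * ((k : ℝ) + 1) + 1) := by
    intro k
    apply Real.Gamma_pos_of_pos
    have : (0:ℝ) ≤ (k : ℝ) := Nat.cast_nonneg k
    nlinarith
  have hwpos : ∀ k : ℕ,
      0 < lam ^ (a * ((k : ℝ) + 1)) / Real.Gamma (a * ((k : ℝ) + 1) + 1) := fun k =>
    div_pos (Real.rpow_pos_of_pos hlam _) (hΓpos k)
  -- per-k term inequality
  have keyk : ∀ k : ℕ,
      lam ^ (-δ * a) * mlMomTerm h a 0 lam f k -
        lam ^ (-(δ - 1) * a) * mom h 1 f * (1 / Real.Gamma (a * ((k : ℝ) + 1) + 1)) ≤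
      mlMomTerm h a δ lam f k := by
    intro k
    have H := mul_le_mul_of_nonneg_right (key k) (hwpos k).le
    have e1 : lam ^ ((-a) * (k : ℝ)) * lam ^ (a * ((k : ℝ) + 1)) = lam ^ a := by
      rw [← Real.rpow_add hlam]; ring_nf
    have e2 : lam ^ (-δ * a) * lam ^ a = lam ^ (-(δ - 1) * a) := by
      rw [← Real.rpow_add hlam]; ring_nf
    calc lam ^ (-δ * a) * mlMomTerm h a 0 lam f k -
          lam ^ (-(δ - 1) * a) * mom h 1 f * (1 / Real.Gamma (a * ((k : ℝ) + 1) + 1))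
        = (lam ^ (-δ * a) * mom h ((k : ℝ) + 1) f -
            lam ^ (-δ * a) * lam ^ ((-a) * (k : ℝ)) * mom h 1 f) *
            (lam ^ (a * ((k : ℝ) + 1)) / Real.Gamma (a * ((k : ℝ) + 1) + 1)) := by
          have e3 : lam ^ (-(δ - 1) * a) =
              lam ^ (-δ * a) * (lam ^ ((-a) * (k : ℝ)) * lam ^ (a * ((k : ℝ) + 1))) := by
            rw [← Real.rpow_add hlam, ← Real.rpow_add hlam]; ring_nf
          unfold mlMomTerm
          rw [show ((k : ℝ) + 1) + 0 = (k : ℝ) + 1 by ring, e3]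
          ring
      _ ≤ mom h (((k : ℝ) + 1) + δ) f *
            (lam ^ (a * ((k : ℝ) + 1)) / Real.Gamma (a * ((k : ℝ) + 1) + 1)) := H
      _ = mlMomTerm h a δ lam f k := by unfold mlMomTerm; ring
  -- summability of 1/Γ
  have hg : Summable (fun k : ℕ => 1 / Real.Gamma (a * ((k : ℝ) + 1) + 1)) := by
    have hfac : Summable (fun k : ℕ => 1 / (Nat.factorial (k + 1) : ℝ)) := by
      have := Real.summable_pow_div_factorial 1
      simp only [one_pow] at this
      exact (this.comp_injective Nat.succ_injective)
    apply Summable.of_nonneg_of_le (fun k => by positivity) _ hfac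
    intro k
    have hmono := Real.Gamma_strictMonoOn_Ici.monotoneOn
    have h1 : ((k:ℝ) + 2) ∈ Set.Ici (2:ℝ) := by
      have : (0:ℝ) ≤ (k:ℝ) := Nat.cast_nonneg k
      simp only [Set.mem_Ici]; linarith
    have h2 : a * ((k : ℝ) + 1) + 1 ∈ Set.Ici (2:ℝ) := by
      have : (0:ℝ) ≤ (k:ℝ) := Nat.cast_nonneg k
      simp only [Set.mem_Ici]; nlinarith
    have h3 : ((k:ℝ) + 2) ≤ a * ((k : ℝ) + 1) + 1 := by
      have : (0:ℝ) ≤ (k:ℝ) := Nat.cast_nonneg k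
      nlinarith
    have h4 : Real.Gamma ((k:ℝ) + 2) ≤ Real.Gamma (a * ((k : ℝ) + 1) + 1) :=
      hmono h1 h2 h3
    have h5 : Real.Gamma ((k:ℝ) + 2) = (Nat.factorial (k + 1) : ℝ) := by
      have := Real.Gamma_nat_eq_factorial (k + 1)
      push_cast at this ⊢
      convert this using 2
      ring
    rw [← h5]
    apply one_div_le_one_div_of_le
    · rw [h5]; positivity
    · exact h4
  -- assemble
  have hsumL : Summable (fun k : ℕ =>
      lam ^ (-δ * a) * mlMomTerm h a 0 lam f k -
        lam ^ (-(δ - 1) * a) * mom h 1 f * (1 / Real.Gamma (a * ((k : ℝ) + 1) + 1))) :=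
    (hs0.mul_left _).sub ((hg.mul_left _))
  have := Summable.tsum_le_tsum keyk hsumL hsδ
  rw [Summable.tsum_sub (hs0.mul_left _) (hg.mul_left _), tsum_mul_left, tsum_mul_left] at this
  unfold mlMom mlEone
  exact this
end

section
/- Supersolution comparison for the moment ODE: let A, B, p > 0 with p > 1, and suppose y : [0,∞) → ℝ≥0 is differentiable with y'(t) ≤ A − B·y(t)^p for all t ≥ 0. Then for all t > 0, y(t) ≤ y(0)/(1 + B(p−1) y(0)^{p−1} t)^{1/(p−1)} + (A/B)^{1/p}. -/
open Real Set

/-- Superadditivity of `x ^ p` for `p ≥ 1` on nonnegative reals. -/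
lemma aux_add_rpow_le (a b p : ℝ) (ha : 0 ≤ a) (hb : 0 ≤ b) (hp : 1 ≤ p) :
    a ^ p + b ^ p ≤ (a + b) ^ p := by
  have h := NNReal.add_rpow_le_rpow_add a.toNNReal b.toNNReal hp
  have h2 : ((a.toNNReal : ℝ)) ^ p + ((b.toNNReal : ℝ)) ^ p
      ≤ ((a.toNNReal : ℝ) + (b.toNNReal : ℝ)) ^ p := by
    have := NNReal.coe_le_coe.2 h
    push_cast at this
    simpa [NNReal.coe_rpow] using this
  rwa [Real.coe_toNNReal a ha, Real.coe_toNNReal b hb] at h2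

/-- Supersolution comparison for the moment ODE: if `A, B > 0`, `p > 1`, and
`y ≥ 0` is differentiable with `y'(t) ≤ A - B y(t)^p` on `[0,∞)`, then for all `t > 0`,
`y(t) ≤ y(0)/(1 + B(p-1) y(0)^{p-1} t)^{1/(p-1)} + (A/B)^{1/p}`. -/
theorem stmt_19 (A B p : ℝ) (hA : 0 < A) (hB : 0 < B) (hp : 1 < p)
    (y y' : ℝ → ℝ) (hy0 : ∀ t, 0 ≤ t → 0 ≤ y t)
    (hyd : ∀ t, 0 ≤ t → HasDerivAt y (y' t) t)
    (hineq : ∀ t, 0 ≤ t → y' t ≤ A - B * y t ^ p) :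
    ∀ t, 0 < t →
      y t ≤ y 0 / (1 + B * (p - 1) * y 0 ^ (p - 1) * t) ^ (1 / (p - 1)) + (A / B) ^ (1 / p) := by
  intro t0 ht0
  have hy00 : 0 ≤ y 0 := hy0 0 le_rfl
  have hp1 : (0 : ℝ) < p - 1 := sub_pos.2 hp
  have hp0 : (0 : ℝ) < p := lt_trans one_pos hp
  set q : ℝ := 1 / (p - 1) with hq
  have hq0 : 0 < q := by positivity
  set c : ℝ := B * (p - 1) * y 0 ^ (p - 1) with hc
  have hc0 : 0 ≤ c := by positivity
  set a : ℝ := (A / B) ^ (1 / p) with ha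
  have ha0 : 0 < a := Real.rpow_pos_of_pos (div_pos hA hB) _
  set Y : ℝ → ℝ := fun t => y 0 / (1 + c * t) ^ q + a with hY
  set Y' : ℝ → ℝ := fun t => -(B * (y 0 / (1 + c * t) ^ q) ^ p) with hY'
  have hu : ∀ t : ℝ, 0 ≤ t → (1 : ℝ) ≤ 1 + c * t := fun t ht => by nlinarith
  have hupos : ∀ t : ℝ, 0 ≤ t → (0 : ℝ) < 1 + c * t := fun t ht =>
    lt_of_lt_of_le one_pos (hu t ht)
  have hY1nn : ∀ t : ℝ, 0 ≤ t → 0 ≤ y 0 / (1 + c * t) ^ q := fun t ht =>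
    div_nonneg hy00 (Real.rpow_nonneg (hupos t ht).le _)
  -- Y has derivative Y' on [0, ∞)
  have hYd : ∀ t : ℝ, 0 ≤ t → HasDerivAt Y (Y' t) t := by
    intro t ht
    have hut : (0 : ℝ) < 1 + c * t := hupos t ht
    have hud : HasDerivAt (fun s : ℝ => 1 + c * s) c t := by
      simpa using ((hasDerivAt_id t).const_mul c).const_add 1
    have hvd : HasDerivAt (fun s : ℝ => (1 + c * s) ^ q) (c * q * (1 + c * t) ^ (q - 1)) t :=
      hud.rpow_const (Or.inl hut.ne')
    have hvne : (1 + c * t) ^ q ≠ 0 := (Real.rpow_pos_of_pos hut q).ne'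
    have hYt : HasDerivAt Y
        ((0 * ((1 + c * t) ^ q) - y 0 * (c * q * (1 + c * t) ^ (q - 1))) / ((1 + c * t) ^ q) ^ 2)
        t := ((hasDerivAt_const t (y 0)).div hvd hvne).add_const a
    convert hYt using 1
    have hy0p : y 0 ^ p = y 0 * y 0 ^ (p - 1) := by
      rcases eq_or_lt_of_le hy00 with h | h
      · rw [← h, Real.zero_rpow hp0.ne', zero_mul]
      · calc y 0 ^ p = y 0 ^ (1 + (p - 1)) := by norm_num
          _ = y 0 ^ (1 : ℝ) * y 0 ^ (p - 1) := Real.rpow_add h 1 (p - 1)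
          _ = y 0 * y 0 ^ (p - 1) := by rw [Real.rpow_one]
    have hcq : c * q = B * y 0 ^ (p - 1) := by
      rw [hc, hq]; field_simp
    have hpow2 : ((1 + c * t) ^ q) ^ 2 = (1 + c * t) ^ (q + q) := by
      rw [Real.rpow_add hut]; ring
    have hdivp : (y 0 / (1 + c * t) ^ q) ^ p = y 0 ^ p / (1 + c * t) ^ (q * p) := by
      rw [Real.div_rpow hy00 (Real.rpow_nonneg hut.le _), ← Real.rpow_mul hut.le]
    have hexp : (1 + c * t) ^ (q - 1) * (1 + c * t) ^ (q * p) = (1 + c * t) ^ (q + q) := by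
      rw [← Real.rpow_add hut]
      congr 1
      rw [hq]; field_simp; ring
    show -(B * (y 0 / (1 + c * t) ^ q) ^ p)
        = (0 * ((1 + c * t) ^ q) - y 0 * (c * q * (1 + c * t) ^ (q - 1))) / ((1 + c * t) ^ q) ^ 2
    rw [hdivp, hpow2, zero_mul, zero_sub, neg_div, neg_inj, mul_div_assoc',
      div_eq_div_iff (Real.rpow_pos_of_pos hut _).ne' (Real.rpow_pos_of_pos hut _).ne']
    calc B * y 0 ^ p * (1 + c * t) ^ (q + q)
        = y 0 * (B * y 0 ^ (p - 1)) * ((1 + c * t) ^ (q - 1) * (1 + c * t) ^ (q * p)) := by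
          rw [hexp, hy0p]; ring
      _ = y 0 * (c * q * (1 + c * t) ^ (q - 1)) * (1 + c * t) ^ (q * p) := by
          rw [hcq]; ring
  -- comparison with Y + ε for every ε > 0
  have key : ∀ ε : ℝ, 0 < ε → y t0 ≤ Y t0 + ε := by
    intro ε hε
    have hcomp := image_le_of_deriv_right_lt_deriv_boundary' (a := 0) (b := t0)
      (f := y) (f' := y') (B := fun t => Y t + ε) (B' := Y')
      (fun x hx => (hyd x hx.1).continuousAt.continuousWithinAt)
      (fun x hx => (hyd x hx.1).hasDerivWithinAt)
      (by
        show y 0 ≤ Y 0 + ε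
        have hY0 : Y 0 = y 0 + a := by simp [hY]
        rw [hY0]; linarith)
      (fun x hx => ((hYd x hx.1).continuousAt.continuousWithinAt).add continuousWithinAt_const)
      (fun x hx => ((hYd x hx.1).add_const ε).hasDerivWithinAt)
      (by
        intro x hx heq
        have heq' : y x = Y x + ε := heq
        have hx0 : 0 ≤ x := hx.1
        have hY1 : 0 ≤ y 0 / (1 + c * x) ^ q := hY1nn x hx0
        have hYnn : 0 ≤ Y x := by rw [hY]; positivity
        have h1 : y' x ≤ A - B * y x ^ p := hineq x hx0
        have h2 : A - B * y x ^ p < A - B * Y x ^ p := by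
          have hlt : Y x ^ p < y x ^ p := by
            apply Real.rpow_lt_rpow hYnn _ hp0
            rw [heq']; linarith
          nlinarith
        have h3 : A - B * Y x ^ p ≤ Y' x := by
          have hsum : (y 0 / (1 + c * x) ^ q) ^ p + a ^ p ≤ Y x ^ p := by
            simpa [hY] using aux_add_rpow_le _ _ p hY1 ha0.le hp.le
          have hap : a ^ p = A / B := by
            rw [ha, one_div, Real.rpow_inv_rpow (div_pos hA hB).le hp0.ne']
          have hABle : A ≤ B * Y x ^ p - B * (y 0 / (1 + c * x) ^ q) ^ p := by
            calc A = B * (A / B) := by field_simp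
              _ ≤ B * (Y x ^ p - (y 0 / (1 + c * x) ^ q) ^ p) := by
                  apply mul_le_mul_of_nonneg_left _ hB.le
                  rw [← hap]; linarith
              _ = B * Y x ^ p - B * (y 0 / (1 + c * x) ^ q) ^ p := by ring
          have hY'x : Y' x = -(B * (y 0 / (1 + c * x) ^ q) ^ p) := rfl
          rw [hY'x]; linarith
        show y' x < Y' x
        linarith)
    have := hcomp (x := t0) ⟨ht0.le, le_rfl⟩
    simpa using this
  have hfin : y t0 ≤ Y t0 := le_of_forall_pos_le_add key
  simpa [hY] using hfin
end
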